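/- arXiv:1902.07174 — 9 statements merged into one kernel-verified Lean document; each statement's English description precedes it below -/
import Mathlib

section
/- Let (X, λ) be a σ-finite measure space, let μ and ν be finite signed measures on X whose negative parts μ⁻ and ν⁻ are absolutely continuous with respect to λ, and let t ∈ [0,1]. Then the negative part of the signed measure (1−t)μ + tν is absolutely continuous with respect to λ, and Φ((1−t)μ + tν) ≤ (1−t)Φ(μ) + tΦ(ν), i.e. ∫_X exp(−d((1−t)μ+tν)/dλ) dλ ≤ (1−t)∫_X exp(−dμ/dλ) dλ + t∫_X exp(−dν/dλ) dλ, with values in [0,+∞]. -/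
open MeasureTheory Filter Topology

lemma aux_nonneg_on_null {X : Type*} [MeasurableSpace X] {lam : Measure X}
    (ρ : SignedMeasure X) (hρ : ρ.toJordanDecomposition.negPart ≪ lam)
    {S A : Set X} (hS0 : lam S = 0) (hA : MeasurableSet A) (hAS : A ⊆ S) :
    0 ≤ ρ A := by
  have hneg : ρ.toJordanDecomposition.negPart A = 0 :=
    measure_mono_null hAS (hρ hS0)
  have h1 : ρ A = (ρ.toJordanDecomposition.posPart A).toReal -
      (ρ.toJordanDecomposition.negPart A).toReal := by
    conv_lhs => rw [← ρ.toSignedMeasure_toJordanDecomposition]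
    rw [MeasureTheory.JordanDecomposition.toSignedMeasure,
      Measure.toSignedMeasure_sub_apply hA]
    rfl
  rw [h1, hneg]
  simp [ENNReal.toReal_nonneg]

/-- Convexity of the functional `Φ(μ) = ∫ exp(−dμ/dλ) dλ`: if the negative parts of the
finite signed measures `μ` and `ν` are absolutely continuous with respect to `λ`, then so is
the negative part of `(1−t)μ + tν` for `t ∈ [0,1]`, and
`Φ((1−t)μ + tν) ≤ (1−t)Φ(μ) + tΦ(ν)` (with values in `[0,+∞]`). -/
theorem stmt1 {X : Type*} [MeasurableSpace X] (lam : Measure X) [SigmaFinite lam]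
    (μ ν : SignedMeasure X) (t : ℝ) (ht0 : 0 ≤ t) (ht1 : t ≤ 1)
    (hμ : μ.toJordanDecomposition.negPart ≪ lam)
    (hν : ν.toJordanDecomposition.negPart ≪ lam) :
    ((1 - t) • μ + t • ν).toJordanDecomposition.negPart ≪ lam ∧
    (∫⁻ x, ENNReal.ofReal (Real.exp (-(((1 - t) • μ + t • ν).rnDeriv lam x))) ∂lam) ≤
      ENNReal.ofReal (1 - t) *
          (∫⁻ x, ENNReal.ofReal (Real.exp (-(μ.rnDeriv lam x))) ∂lam) +
        ENNReal.ofReal t * ∫⁻ x, ENNReal.ofReal (Real.exp (-(ν.rnDeriv lam x))) ∂lam := by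
  have ht0' : (0:ℝ) ≤ 1 - t := by linarith
  set s : SignedMeasure X := (1 - t) • μ + t • ν with hs
  constructor
  · -- absolute continuity of the negative part
    refine Measure.AbsolutelyContinuous.mk fun S hS hS0 => ?_
    obtain ⟨i, hi₁, hi₂, hi₃, hpos, hneg⟩ := s.toJordanDecomposition_spec
    rw [hneg, SignedMeasure.toMeasureOfLEZero_apply _ hi₃ hi₁.compl hS]
    have hA : MeasurableSet (iᶜ ∩ S) := hi₁.compl.inter hS
    have hval : s (iᶜ ∩ S) = 0 := by
      have hle : s (iᶜ ∩ S) ≤ 0 :=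
        (VectorMeasure.restrict_le_restrict_iff _ _ hi₁.compl).1 hi₃ hA
          Set.inter_subset_left
    -- nonnegativity
      have hge : 0 ≤ s (iᶜ ∩ S) := by
        have h1 := aux_nonneg_on_null μ hμ hS0 hA Set.inter_subset_right
        have h2 := aux_nonneg_on_null ν hν hS0 hA Set.inter_subset_right
        have : s (iᶜ ∩ S) = (1 - t) * μ (iᶜ ∩ S) + t * ν (iᶜ ∩ S) := by
          simp [hs, VectorMeasure.add_apply, VectorMeasure.smul_apply, smul_eq_mul]
        rw [this]
        positivity
      linarith
    simp [hval]
  · -- convexity inequality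
    have hrd : s.rnDeriv lam =ᵐ[lam]
        fun x => (1 - t) * μ.rnDeriv lam x + t * ν.rnDeriv lam x := by
      filter_upwards [SignedMeasure.rnDeriv_add ((1 - t) • μ) (t • ν) lam,
        SignedMeasure.rnDeriv_smul μ lam (1 - t),
        SignedMeasure.rnDeriv_smul ν lam t] with x hx h1 h2
      simp only [hs, hx, Pi.add_apply, h1, h2, Pi.smul_apply, smul_eq_mul]
    calc
      (∫⁻ x, ENNReal.ofReal (Real.exp (-(s.rnDeriv lam x))) ∂lam) ≤
          ∫⁻ x, (ENNReal.ofReal (1 - t) * ENNReal.ofReal (Real.exp (-(μ.rnDeriv lam x)))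
            + ENNReal.ofReal t * ENNReal.ofReal (Real.exp (-(ν.rnDeriv lam x)))) ∂lam := by
        refine lintegral_mono_ae ?_
        filter_upwards [hrd] with x hx
        rw [hx]
        have hconv : Real.exp (-((1 - t) * μ.rnDeriv lam x + t * ν.rnDeriv lam x)) ≤
            (1 - t) * Real.exp (-(μ.rnDeriv lam x)) + t * Real.exp (-(ν.rnDeriv lam x)) := by
          have := convexOn_exp.2 (Set.mem_univ (-(μ.rnDeriv lam x)))
            (Set.mem_univ (-(ν.rnDeriv lam x))) ht0' ht0 (by ring)
          simpa [smul_eq_mul, neg_add, mul_neg, add_comm] using this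
        calc ENNReal.ofReal (Real.exp (-((1 - t) * μ.rnDeriv lam x + t * ν.rnDeriv lam x)))
            ≤ ENNReal.ofReal ((1 - t) * Real.exp (-(μ.rnDeriv lam x))
              + t * Real.exp (-(ν.rnDeriv lam x))) := ENNReal.ofReal_le_ofReal hconv
          _ = ENNReal.ofReal (1 - t) * ENNReal.ofReal (Real.exp (-(μ.rnDeriv lam x)))
              + ENNReal.ofReal t * ENNReal.ofReal (Real.exp (-(ν.rnDeriv lam x))) := by
            rw [ENNReal.ofReal_add (by positivity) (by positivity),
              ENNReal.ofReal_mul ht0', ENNReal.ofReal_mul ht0]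
      _ = ENNReal.ofReal (1 - t) *
            (∫⁻ x, ENNReal.ofReal (Real.exp (-(μ.rnDeriv lam x))) ∂lam) +
          ENNReal.ofReal t * ∫⁻ x, ENNReal.ofReal (Real.exp (-(ν.rnDeriv lam x))) ∂lam := by
        rw [lintegral_add_left, lintegral_const_mul, lintegral_const_mul]
        · exact (ENNReal.measurable_ofReal.comp
            ((Real.measurable_exp.comp (SignedMeasure.measurable_rnDeriv ν lam).neg)))
        · exact (ENNReal.measurable_ofReal.comp
            ((Real.measurable_exp.comp (SignedMeasure.measurable_rnDeriv μ lam).neg)))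
        · exact (ENNReal.measurable_ofReal.comp
            ((Real.measurable_exp.comp (SignedMeasure.measurable_rnDeriv μ lam).neg))).const_mul _
end

section
/- Let λ be a finite measure on a measurable space X and let μ be a finite signed measure on X such that μ(X) = 0 and the negative part μ⁻ of the Jordan decomposition of μ is absolutely continuous with respect to λ. Then the total variation measure |μ| = μ⁺ + μ⁻ satisfies |μ|(X) = 2 μ⁺(X) = 2 μ⁻(X) ≤ 2 ∫_X exp(−dμ/dλ) dλ. -/
open MeasureTheory Filter Topology

/-- If `μ` is a finite signed measure with `μ(X) = 0` whose negative part is absolutely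
continuous with respect to the finite measure `λ`, then the total variation measure
`|μ| = μ⁺ + μ⁻` satisfies `|μ|(X) = 2μ⁺(X) = 2μ⁻(X) ≤ 2∫ exp(−dμ/dλ) dλ`. -/
theorem stmt2 {X : Type*} [MeasurableSpace X] (lam : Measure X) [IsFiniteMeasure lam]
    (μ : SignedMeasure X) (hzero : μ Set.univ = 0)
    (hac : μ.toJordanDecomposition.negPart ≪ lam) :
    μ.totalVariation Set.univ = 2 * μ.toJordanDecomposition.posPart Set.univ ∧
    2 * μ.toJordanDecomposition.posPart Set.univ =
      2 * μ.toJordanDecomposition.negPart Set.univ ∧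
    2 * μ.toJordanDecomposition.negPart Set.univ ≤
      2 * ∫⁻ x, ENNReal.ofReal (Real.exp (-(μ.rnDeriv lam x))) ∂lam := by
  set p := μ.toJordanDecomposition.posPart with hp
  set n := μ.toJordanDecomposition.negPart with hn
  -- posPart univ = negPart univ
  have happ : μ Set.univ = (p Set.univ).toReal - (n Set.univ).toReal := by
    conv_lhs => rw [← μ.toSignedMeasure_toJordanDecomposition]
    rw [JordanDecomposition.toSignedMeasure, VectorMeasure.sub_apply,
      Measure.toSignedMeasure_apply_measurable MeasurableSet.univ,
      Measure.toSignedMeasure_apply_measurable MeasurableSet.univ]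
    rfl
  have hpn : p Set.univ = n Set.univ := by
    rw [hzero] at happ
    have := sub_eq_zero.mp happ.symm
    exact (ENNReal.toReal_eq_toReal_iff' (measure_ne_top p _) (measure_ne_top n _)).mp this
  refine ⟨?_, by rw [hpn], ?_⟩
  · rw [SignedMeasure.totalVariation, Measure.add_apply, hpn, two_mul]
  -- the inequality
  obtain ⟨S, hSm, hpS, hnSc⟩ := μ.toJordanDecomposition.mutuallySingular
  have hnuniv : n Set.univ = n S := by
    have : n Set.univ = n S + n Sᶜ := (measure_add_measure_compl hSm).symm
    rw [this, hnSc, add_zero]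
  have hnS : n S = ∫⁻ x in S, n.rnDeriv lam x ∂lam :=
    (Measure.setLIntegral_rnDeriv hac S).symm
  -- a.e. on S, the posPart density vanishes
  have hgS : ∀ᵐ x ∂(lam.restrict S), p.rnDeriv lam x = 0 := by
    have hle : ∫⁻ x in S, p.rnDeriv lam x ∂lam ≤ p S :=
      Measure.setLIntegral_rnDeriv_le S
    rw [hpS] at hle
    have h0 : ∫⁻ x in S, p.rnDeriv lam x ∂lam = 0 := le_antisymm hle zero_le
    exact (lintegral_eq_zero_iff (Measure.measurable_rnDeriv p lam)).mp h0
  have hfin : ∀ᵐ x ∂(lam.restrict S), n.rnDeriv lam x < ⊤ :=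
    ae_restrict_of_ae (Measure.rnDeriv_lt_top n lam)
  have key : ∫⁻ x in S, n.rnDeriv lam x ∂lam ≤
      ∫⁻ x in S, ENNReal.ofReal (Real.exp (-(μ.rnDeriv lam x))) ∂lam := by
    refine lintegral_mono_ae ?_
    filter_upwards [hgS, hfin] with x hg hf
    have hrn : μ.rnDeriv lam x = - (n.rnDeriv lam x).toReal := by
      simp [SignedMeasure.rnDeriv, ← hp, ← hn, hg]
    rw [hrn, neg_neg]
    calc n.rnDeriv lam x = ENNReal.ofReal (n.rnDeriv lam x).toReal := by
          rw [ENNReal.ofReal_toReal hf.ne]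
      _ ≤ ENNReal.ofReal (Real.exp (n.rnDeriv lam x).toReal) := by
          exact ENNReal.ofReal_le_ofReal
            (le_trans (le_add_of_nonneg_right zero_le_one) (Real.add_one_le_exp _))
  have : n Set.univ ≤ ∫⁻ x, ENNReal.ofReal (Real.exp (-(μ.rnDeriv lam x))) ∂lam := by
    rw [hnuniv, hnS]
    exact key.trans (setLIntegral_le_lintegral S _)
  exact mul_le_mul_right this 2
end

section
/- Let H be a real Hilbert space, S ⊆ H a set, and F : H → ℝ a function. Assume that for every u ∈ S there exists ε₀ > 0 such that for all ε ∈ (0, ε₀) one has (1−ε)u ∈ S and F((1−ε)u) = F(u). Let h : [0,∞) → H be a differentiable curve such that for every t ≥ 0 and every v ∈ S one has h(t) ∈ S and ⟨h'(t), h(t) − v⟩ ≤ F(v) − F(h(t)). Then ⟨h'(t), h(t)⟩ ≤ 0 for every t ≥ 0, and consequently the function t ↦ ‖h(t)‖² is nonincreasing on [0,∞). -/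
open Set

/-- Decay estimate for EVI solutions: if the domain `S` and the functional `F` are
invariant under the scalings `u ↦ (1−ε)u` for small `ε > 0`, then any differentiable EVI
solution `h` of the gradient flow of `F` satisfies `⟨h'(t), h(t)⟩ ≤ 0` for every `t ≥ 0`,
and consequently `t ↦ ‖h(t)‖²` is nonincreasing on `[0,∞)`. -/
theorem stmt6 {H : Type*} [NormedAddCommGroup H] [InnerProductSpace ℝ H] [CompleteSpace H]
    (S : Set H) (F : H → ℝ)
    (hscale : ∀ u ∈ S, ∃ ε₀ > (0 : ℝ), ∀ ε : ℝ, 0 < ε → ε < ε₀ →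
      (1 - ε) • u ∈ S ∧ F ((1 - ε) • u) = F u)
    (h h' : ℝ → H)
    (hd : ∀ t, 0 ≤ t → HasDerivWithinAt h (h' t) (Ici 0) t)
    (hS : ∀ t, 0 ≤ t → h t ∈ S)
    (hEVI : ∀ t, 0 ≤ t → ∀ v ∈ S, (inner ℝ (h' t) (h t - v) : ℝ) ≤ F v - F (h t)) :
    (∀ t, 0 ≤ t → (inner ℝ (h' t) (h t) : ℝ) ≤ 0) ∧
      AntitoneOn (fun t => ‖h t‖ ^ 2) (Ici 0) := by
  have key : ∀ t, 0 ≤ t → (inner ℝ (h' t) (h t) : ℝ) ≤ 0 := by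
    intro t ht
    obtain ⟨ε₀, hε₀, hsc⟩ := hscale (h t) (hS t ht)
    set ε := ε₀ / 2 with hε
    have hεpos : 0 < ε := by positivity
    have hεlt : ε < ε₀ := by linarith
    obtain ⟨hmem, hF⟩ := hsc ε hεpos hεlt
    have := hEVI t ht _ hmem
    rw [hF, sub_self] at this
    have heq : h t - (1 - ε) • h t = ε • h t := by
      rw [sub_smul, one_smul]; abel
    rw [heq, real_inner_smul_right] at this
    nlinarith
  refine ⟨key, ?_⟩
  have hcont : ContinuousOn (fun t => ‖h t‖ ^ 2) (Ici 0) := by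
    have : ContinuousOn h (Ici 0) := fun t ht => (hd t ht).continuousWithinAt
    exact (continuous_norm.comp_continuousOn this).pow 2
  have hderiv : ∀ t ∈ interior (Ici (0:ℝ)),
      HasDerivAt (fun t => ‖h t‖ ^ 2) (2 * inner ℝ (h' t) (h t)) t := by
    intro t ht
    rw [interior_Ici] at ht
    have ht0 : (0:ℝ) ≤ t := le_of_lt ht
    have hdt : HasDerivAt h (h' t) t :=
      (hd t ht0).hasDerivAt (Ici_mem_nhds ht)
    have := hdt.inner ℝ hdt
    have heq : (fun t => (inner ℝ (h t) (h t) : ℝ)) = fun t => ‖h t‖ ^ 2 := by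
      funext s; rw [real_inner_self_eq_norm_sq]
    rw [heq] at this
    refine this.congr_deriv ?_
    rw [real_inner_comm]
    ring
  apply antitoneOn_of_deriv_nonpos (convex_Ici 0) hcont
  · intro t ht
    exact ((hderiv t ht).differentiableAt).differentiableWithinAt
  · intro t ht
    rw [(hderiv t ht).deriv]
    have := key t (le_of_lt (by rwa [interior_Ici] at ht))
    linarith
end

section
/- Let L > 0, V ≥ 0, and let u : ℝ → ℝ be measurable with pointwise total variation of u over the interval [0, L] at most V (i.e. eVariationOn u [0,L] ≤ V), and suppose ∫_{(0,L]} exp(u(x)) dx = 1. Then for every x ∈ [0, L] one has e^{−V}/L ≤ exp(u(x)) ≤ e^{V}/L. -/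
open Set MeasureTheory

/-- Gradient bounds from a variation bound: if `u : ℝ → ℝ` is measurable with pointwise
total variation at most `V` on `[0,L]` and `∫_{(0,L]} exp(u) dx = 1`, then
`e^{−V}/L ≤ exp(u(x)) ≤ e^{V}/L` for every `x ∈ [0,L]`. -/
theorem stmt7 (L V : ℝ) (hL : 0 < L) (hV : 0 ≤ V) (u : ℝ → ℝ) (hu : Measurable u)
    (hvar : eVariationOn u (Icc 0 L) ≤ ENNReal.ofReal V)
    (hint : (∫ x in Ioc (0:ℝ) L, Real.exp (u x)) = 1) :
    ∀ x ∈ Icc (0:ℝ) L,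
      Real.exp (-V) / L ≤ Real.exp (u x) ∧ Real.exp (u x) ≤ Real.exp V / L := by
  intro x hx
  have hdist : ∀ y ∈ Icc (0:ℝ) L, |u y - u x| ≤ V := by
    intro y hy
    have h := (eVariationOn.edist_le u hy hx).trans hvar
    rw [edist_dist] at h
    have := (ENNReal.ofReal_le_ofReal_iff hV).mp h
    simpa [Real.dist_eq] using this
  have hsub : Ioc (0:ℝ) L ⊆ Icc 0 L := Ioc_subset_Icc_self
  have hbound : ∀ y ∈ Ioc (0:ℝ) L,
      Real.exp (u x - V) ≤ Real.exp (u y) ∧ Real.exp (u y) ≤ Real.exp (u x + V) := by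
    intro y hy
    have h1 := abs_le.mp (hdist y (hsub hy))
    constructor <;> apply Real.exp_le_exp.mpr <;> linarith [h1.1, h1.2]
  have hmeas : MeasurableSet (Ioc (0:ℝ) L) := measurableSet_Ioc
  have hvolne : volume (Ioc (0:ℝ) L) ≠ ⊤ := by
    simp [Real.volume_Ioc]
  have hvollt : volume (Ioc (0:ℝ) L) < ⊤ := lt_top_iff_ne_top.mpr hvolne
  have hint' : IntegrableOn (fun y => Real.exp (u y)) (Ioc 0 L) := by
    apply Measure.integrableOn_of_bounded hvolne
      (Real.measurable_exp.comp hu).aestronglyMeasurable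
    filter_upwards [ae_restrict_mem hmeas] with y hy
    have := (hbound y hy).2
    simp only [Function.comp_apply, Real.norm_eq_abs, abs_of_pos (Real.exp_pos _)]
    exact this
  have hLvol : (volume (Ioc (0:ℝ) L)).toReal = L := by
    simp [Real.volume_Ioc, hL.le]
  have hconst : ∀ c : ℝ, (∫ _y in Ioc (0:ℝ) L, c) = L * c := by
    intro c
    rw [setIntegral_const, measureReal_def, hLvol, smul_eq_mul]
  have hupper : (1:ℝ) ≤ L * Real.exp (u x + V) := by
    rw [← hconst (Real.exp (u x + V)), ← hint]
    exact setIntegral_mono_on hint' (integrableOn_const hvolne) hmeas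
      (fun y hy => (hbound y hy).2)
  have hlower : L * Real.exp (u x - V) ≤ 1 := by
    rw [← hconst (Real.exp (u x - V)), ← hint]
    exact setIntegral_mono_on (integrableOn_const hvolne) hint' hmeas
      (fun y hy => (hbound y hy).1)
  have hprod : Real.exp (-V) * Real.exp V = 1 := by
    rw [← Real.exp_add]; simp
  have hadd : Real.exp (u x + V) = Real.exp (u x) * Real.exp V := Real.exp_add _ _
  have hsubm : Real.exp (u x - V) * Real.exp V = Real.exp (u x) := by
    rw [← Real.exp_add]; ring_nf
  constructor
  · rw [div_le_iff₀ hL]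
    nlinarith [Real.exp_pos (-V), Real.exp_pos V, Real.exp_pos (u x)]
  · rw [le_div_iff₀ hL]
    nlinarith [Real.exp_pos V, Real.exp_pos (u x - V)]
end

section
/- Let L > 0 and let h : ℝ → ℝ be twice continuously differentiable with h'(x) > 0 for all x and h(x + L) = h(x) + 1 for all x. Set Φ₀ := ∫₀^L exp(−(d/dx) log h'(x)) dx. Then for every x ∈ ℝ one has e^{−2Φ₀}/L ≤ h'(x) ≤ e^{2Φ₀}/L. -/
open intervalIntegral Set

/-- If `u` is differentiable and `u (x+L) = u x + c`, then `deriv u` is `L`-periodic. -/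
lemma stmt8_deriv_shift {u : ℝ → ℝ} (hu : Differentiable ℝ u) {L c : ℝ}
    (hp : ∀ x, u (x + L) = u x + c) (x : ℝ) : deriv u (x + L) = deriv u x := by
  have h1 : HasDerivAt (fun y => u (y + L)) (deriv u (x + L)) x := by
    simpa [Function.comp_def] using (hu (x + L)).hasDerivAt.comp x ((hasDerivAt_id x).add_const L)
  have h2 : (fun y : ℝ => u (y + L)) = fun y => u y + c := funext hp
  rw [h2] at h1
  exact h1.unique ((hu x).hasDerivAt.add_const c)

/-- A priori gradient bounds for smooth monotone periodic height profiles: if `h` is `C²`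
with `h' > 0` and `h(x+L) = h(x) + 1`, and `Φ₀ = ∫₀^L exp(−(log h')'(x)) dx`, then
`e^{−2Φ₀}/L ≤ h'(x) ≤ e^{2Φ₀}/L` for every `x`. -/
theorem stmt8 (L : ℝ) (hL : 0 < L) (h : ℝ → ℝ) (hh : ContDiff ℝ 2 h)
    (hpos : ∀ x, 0 < deriv h x) (hper : ∀ x, h (x + L) = h x + 1)
    (Φ₀ : ℝ)
    (hΦ₀ : Φ₀ = ∫ x in (0:ℝ)..L, Real.exp (-(deriv (fun y => Real.log (deriv h y)) x))) :
    ∀ x : ℝ,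
      Real.exp (-(2 * Φ₀)) / L ≤ deriv h x ∧ deriv h x ≤ Real.exp (2 * Φ₀) / L := by
  have hdiff : Differentiable ℝ h := hh.differentiable (by norm_num)
  set f := deriv h with hf_def
  have hh' : ContDiff ℝ (1 + 1) h := by exact_mod_cast hh
  have hf1 : ContDiff ℝ 1 f := (contDiff_succ_iff_deriv.mp hh').2.2
  have hfd : Differentiable ℝ f := hf1.differentiable one_ne_zero
  have hfc : Continuous f := hf1.continuous
  have hf'c : Continuous (deriv f) := by
    have : ContDiff ℝ ((0 : ℕ) + 1) f := by exact_mod_cast hf1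
    exact (contDiff_succ_iff_deriv.mp this).2.2.continuous
  -- periodicity of f and deriv f
  have hfper : ∀ x, f (x + L) = f x := fun x => by
    simpa using stmt8_deriv_shift hdiff hper x
  have hf'per : ∀ x, deriv f (x + L) = deriv f x := fun x =>
    stmt8_deriv_shift hfd (fun y => by rw [hfper y, add_zero]) x
  -- the function G = (log f)'
  set G : ℝ → ℝ := fun x => deriv f x / f x with hG_def
  have Gc : Continuous G := hf'c.div hfc fun x => (hpos x).ne'
  have hg : ∀ x, HasDerivAt (fun y => Real.log (f y)) (G x) x := fun x => by
    simpa [hG_def, div_eq_inv_mul, Function.comp_def] using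
      (Real.hasDerivAt_log (hpos x).ne').comp x (hfd x).hasDerivAt
  have hderiv_eq : deriv (fun y => Real.log (f y)) = G := funext fun x => (hg x).deriv
  have hΦ : Φ₀ = ∫ x in (0:ℝ)..L, Real.exp (-(G x)) := by rw [hΦ₀, hderiv_eq]
  have Gper : ∀ x, G (x + L) = G x := fun x => by simp [hG_def, hfper, hf'per]
  -- ∫₀^L G = 0
  have hGint : ∫ x in (0:ℝ)..L, G x = 0 := by
    rw [integral_eq_sub_of_hasDerivAt (fun t _ => hg t) (Gc.intervalIntegrable 0 L)]
    have : f L = f 0 := by simpa using hfper 0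
    rw [this, sub_self]
  -- pointwise bound
  have key : ∀ t : ℝ, |t| ≤ t + 2 * Real.exp (-t) := fun t => by
    rcases le_or_gt 0 t with ht | ht
    · rw [abs_of_nonneg ht]; nlinarith [(Real.exp_pos (-t)).le]
    · rw [abs_of_neg ht]; nlinarith [Real.add_one_le_exp (-t)]
  have expc : Continuous fun x => Real.exp (-(G x)) := Real.continuous_exp.comp Gc.neg
  -- ∫₀^L |G| ≤ 2 Φ₀
  have habs : ∫ x in (0:ℝ)..L, |G x| ≤ 2 * Φ₀ := by
    have h1 : ∫ x in (0:ℝ)..L, |G x|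
        ≤ ∫ x in (0:ℝ)..L, (G x + 2 * Real.exp (-(G x))) :=
      integral_mono_on hL.le (Gc.abs.intervalIntegrable 0 L)
        ((Gc.add (continuous_const.mul expc)).intervalIntegrable 0 L)
        (fun x _ => key (G x))
    rw [integral_add (g := fun x => 2 * Real.exp (-(G x))) (Gc.intervalIntegrable 0 L)
        ((continuous_const.mul expc).intervalIntegrable 0 L), hGint,
      integral_const_mul, zero_add] at h1
    rw [hΦ]; linarith
  -- point where f = 1/L
  obtain ⟨x₀, -, hx₀⟩ := exists_hasDerivAt_eq_slope h f hL (hdiff.continuous.continuousOn)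
    (fun x _ => (hdiff x).hasDerivAt)
  have hfx₀ : f x₀ = 1 / L := by
    rw [hx₀]
    have : h L = h 0 + 1 := by simpa using hper 0
    rw [this]; ring_nf
  -- main argument
  intro x
  set n : ℤ := ⌊(x - x₀) / L⌋ with hn
  set x' := x - n * L with hx'def
  have hx'1 : x₀ ≤ x' := by
    have h1 : (n : ℝ) ≤ (x - x₀) / L := Int.floor_le _
    have h2 : (n : ℝ) * L ≤ x - x₀ := by
      rw [← le_div_iff₀ hL]; exact h1
    simp only [hx'def]; linarith
  have hx'2 : x' ≤ x₀ + L := by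
    have h1 : (x - x₀) / L < n + 1 := Int.lt_floor_add_one _
    have h2 : x - x₀ < ((n : ℝ) + 1) * L := by
      rw [← div_lt_iff₀ hL]; exact h1
    simp only [hx'def]; nlinarith
  have gper : Function.Periodic (fun y => Real.log (f y)) L := fun y => by simp only [hfper]
  have hgx' : Real.log (f x') = Real.log (f x) := by
    simpa [hx'def] using gper.sub_int_mul_eq (x := x) n
  have hFTC : ∫ t in x₀..x', G t = Real.log (f x') - Real.log (f x₀) :=
    integral_eq_sub_of_hasDerivAt (fun t _ => hg t) (Gc.intervalIntegrable _ _)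
  have h2 : |Real.log (f x') - Real.log (f x₀)| ≤ ∫ t in x₀..x', |G t| := by
    rw [← hFTC]; exact abs_integral_le_integral_abs hx'1
  have h3 : ∫ t in x₀..x', |G t| ≤ ∫ t in x₀..x₀ + L, |G t| :=
    integral_mono_interval le_rfl hx'1 hx'2
      (Filter.Eventually.of_forall fun t => abs_nonneg _)
      (Gc.abs.intervalIntegrable _ _)
  have h4 : ∫ t in x₀..x₀ + L, |G t| = ∫ t in (0:ℝ)..L, |G t| := by
    have hp : Function.Periodic (fun t => |G t|) L := fun t => by simp only [Gper]
    simpa using hp.intervalIntegral_add_eq x₀ 0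
  have hbound : |Real.log (f x) - Real.log (f x₀)| ≤ 2 * Φ₀ := by
    rw [← hgx']
    calc |Real.log (f x') - Real.log (f x₀)| ≤ ∫ t in x₀..x', |G t| := h2
      _ ≤ ∫ t in x₀..x₀ + L, |G t| := h3
      _ = ∫ t in (0:ℝ)..L, |G t| := h4
      _ ≤ 2 * Φ₀ := habs
  have hlogx₀ : Real.log (f x₀) = -Real.log L := by
    rw [hfx₀, one_div, Real.log_inv]
  obtain ⟨hb1, hb2⟩ := abs_le.mp hbound
  constructor
  · calc Real.exp (-(2 * Φ₀)) / L = Real.exp (-(2 * Φ₀) - Real.log L) := by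
          rw [Real.exp_sub, Real.exp_log hL]
      _ ≤ Real.exp (Real.log (f x)) := Real.exp_le_exp.mpr (by rw [hlogx₀] at hb1; linarith)
      _ = f x := Real.exp_log (hpos x)
  · calc f x = Real.exp (Real.log (f x)) := (Real.exp_log (hpos x)).symm
      _ ≤ Real.exp (2 * Φ₀ - Real.log L) := Real.exp_le_exp.mpr (by rw [hlogx₀] at hb2; linarith)
      _ = Real.exp (2 * Φ₀) / L := by rw [Real.exp_sub, Real.exp_log hL]
end

section
/- Let L > 0. Let u : ℝ → ℝ be four times continuously differentiable with u'(x) > 0 for all x and u(x+L) = u(x) + 1 for all x, and let w : ℝ → ℝ be continuous and L-periodic. Suppose that for every twice continuously differentiable v : ℝ → ℝ with v'(x) > 0 for all x and v(x+L) = v(x) + 1 for all x, one has ∫₀^L w(x)(u(x) − v(x)) dx ≤ ∫₀^L exp(−(d/dx) log v'(x)) dx − ∫₀^L exp(−(d/dx) log u'(x)) dx. Then for every x ∈ ℝ, w(x) = (d/dx)[ (1/u'(x)) · (d/dx) exp(−(d/dx) log u'(x)) ]. -/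
open Real MeasureTheory intervalIntegral Set

lemma per_min {L : ℝ} (hL : 0 < L) {f : ℝ → ℝ} (hf : Continuous f)
    (hp : Function.Periodic f L) : ∃ y, ∀ x, f y ≤ f x := by
  obtain ⟨x₀, _, hmin⟩ := isCompact_Icc.exists_isMinOn (Set.nonempty_Icc.2 hL.le)
    (hf.continuousOn (s := Set.Icc 0 L))
  refine ⟨x₀, fun x => ?_⟩
  obtain ⟨y, hy, hxy⟩ := hp.exists_mem_Ico₀ hL x
  rw [hxy]; exact hmin ⟨hy.1, hy.2.le⟩

lemma per_bound {L : ℝ} (hL : 0 < L) {f : ℝ → ℝ} (hf : Continuous f)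
    (hp : Function.Periodic f L) : ∃ M, 0 ≤ M ∧ ∀ x, |f x| ≤ M := by
  obtain ⟨y, hy⟩ := per_min hL (f := fun x => -|f x|) (by fun_prop) (fun x => by simp [hp x])
  exact ⟨|f y|, abs_nonneg _, fun x => by have := hy x; simp at this; linarith [abs_nonneg (f y)]⟩

lemma deriv_per {L c : ℝ} {f : ℝ → ℝ} (hp : ∀ x, f (x + L) = f x + c) (x : ℝ) :
    deriv f (x + L) = deriv f x := by
  have h1 : deriv (fun y => f (y + L)) x = deriv f (x + L) := deriv_comp_add_const ..
  have h2 : (fun y => f (y + L)) = fun y => f y + c := funext hp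
  rw [← h1, h2, deriv_add_const]

set_option maxHeartbeats 2000000 in
/-- Fundamental lemma of the calculus of variations, periodic version (one-sided). -/
lemma key_pos {L : ℝ} (hL : 0 < L) (g : ℝ → ℝ) (hg : Continuous g)
    (hgper : ∀ x, g (x + L) = g x)
    (h : ∀ φ : ℝ → ℝ, ContDiff ℝ 2 φ → (∀ x, φ (x + L) = φ x) →
      (∫ x in (0:ℝ)..L, g x * φ x) = 0) (x₀ : ℝ) : g x₀ ≤ 0 := by
  by_contra hpos
  push_neg at hpos
  obtain ⟨δ, hδ, hball⟩ : ∃ δ > 0, ∀ x, |x - x₀| < δ → 0 < g x := by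
    have ho : IsOpen (g ⁻¹' Set.Ioi 0) := isOpen_Ioi.preimage hg
    obtain ⟨δ, hδ, hsub⟩ := Metric.isOpen_iff.1 ho x₀ hpos
    exact ⟨δ, hδ, fun x hx => hsub (by simpa [Real.dist_eq] using hx)⟩
  set r : ℝ := min (δ/2) (L/4) with hr
  have hr0 : 0 < r := lt_min (by linarith) (by linarith)
  have hrδ : r < δ := lt_of_le_of_lt (min_le_left _ _) (by linarith)
  have hrL : r ≤ L/4 := min_le_right _ _
  set θ : ℝ := 2*π*r/L with hθ
  have hθ0 : 0 < θ := by
    apply div_pos (by positivity) hL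
  have hθπ : θ ≤ π := by
    rw [hθ, div_le_iff₀ hL]
    nlinarith [pi_pos]
  set φ : ℝ → ℝ := fun x => Real.smoothTransition (Real.cos (2*π*(x - x₀)/L) - Real.cos θ)
    with hφ
  have hLne : L ≠ 0 := hL.ne'
  have hφc : ContDiff ℝ 2 φ := by
    apply (Real.smoothTransition.contDiff (n := 2)).comp
    exact ((Real.contDiff_cos.comp
      ((contDiff_const.mul (contDiff_id.sub contDiff_const)).div_const L)).sub contDiff_const)
  have hφper : ∀ x, φ (x + L) = φ x := by
    intro x
    have harg : 2*π*(x + L - x₀)/L = 2*π*(x - x₀)/L + 2*π := by field_simp; ring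
    simp only [hφ, harg, Real.cos_add_two_pi]
  have hφnn : ∀ x, 0 ≤ φ x := fun x => Real.smoothTransition.nonneg _
  have hφ0 : 0 < φ x₀ := by
    have h1 : 2*π*(x₀ - x₀)/L = 0 := by simp
    have h2 : Real.cos θ < 1 := by
      have := Real.cos_lt_cos_of_nonneg_of_le_pi (le_refl 0) hθπ hθ0
      simpa using this
    apply Real.smoothTransition.pos_of_pos
    rw [h1, Real.cos_zero]
    linarith
  have hφzero : ∀ x, r ≤ |x - x₀| → |x - x₀| ≤ L/2 → φ x = 0 := by
    intro x h1 h2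
    apply Real.smoothTransition.zero_of_nonpos
    have habs : Real.cos (2*π*(x - x₀)/L) = Real.cos (2*π*|x - x₀|/L) := by
      rcases abs_cases (x - x₀) with ⟨he, _⟩ | ⟨he, _⟩
      · rw [he]
      · rw [he]; rw [show 2*π*(-(x-x₀))/L = -(2*π*(x-x₀)/L) by ring, Real.cos_neg]
    rw [habs]
    have hle : Real.cos (2*π*|x - x₀|/L) ≤ Real.cos θ := by
      apply Real.cos_le_cos_of_nonneg_of_le_pi hθ0.le
      · rw [div_le_iff₀ hL]; nlinarith [pi_pos]
      · rw [hθ, div_le_div_iff_of_pos_right hL]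
        nlinarith [pi_pos]
    linarith
  -- the integral over a shifted period
  have hgφper : Function.Periodic (fun x => g x * φ x) L := fun x => by
    simp only [hgper x, hφper x]
  have h0 := h φ hφc hφper
  set b : ℝ := x₀ - L/2 with hb
  have hshift : (∫ x in (0:ℝ)..L, g x * φ x) = ∫ x in b..(b+L), g x * φ x := by
    have := hgφper.intervalIntegral_add_eq 0 b
    simpa using this
  have hcont : Continuous fun x => g x * φ x := hg.mul hφc.continuous
  have hnn : ∀ x ∈ Set.Icc b (b+L), 0 ≤ g x * φ x := by
    intro x hx
    rcases lt_or_ge (|x - x₀|) r with hc | hc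
    · exact mul_nonneg (hball x (hc.trans hrδ)).le (hφnn x)
    · have h2 : |x - x₀| ≤ L/2 := by
        rw [abs_le]
        constructor <;> [skip; skip] <;>
          · simp only [hb] at hx; obtain ⟨hx1, hx2⟩ := hx; linarith
      rw [hφzero x hc h2, mul_zero]
  -- positivity near x₀
  obtain ⟨ρ, hρ, hballρ⟩ : ∃ ρ > 0, ∀ x, |x - x₀| < ρ → 0 < g x * φ x := by
    have ho : IsOpen ((fun x => g x * φ x) ⁻¹' Set.Ioi 0) := isOpen_Ioi.preimage hcont
    obtain ⟨ρ, hρ, hsub⟩ := Metric.isOpen_iff.1 ho x₀ (mul_pos hpos hφ0)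
    exact ⟨ρ, hρ, fun x hx => hsub (by simpa [Real.dist_eq] using hx)⟩
  set ρ' : ℝ := min (ρ/2) (L/4) with hρ'
  have hρ'0 : 0 < ρ' := lt_min (by linarith) (by linarith)
  have hρ'ρ : ρ' < ρ := lt_of_le_of_lt (min_le_left _ _) (by linarith)
  have hρ'L : ρ' ≤ L/4 := min_le_right _ _
  set c1 : ℝ := x₀ - ρ' with hc1
  set c2 : ℝ := x₀ + ρ' with hc2
  have hbc1 : b ≤ c1 := by simp only [hb, hc1]; linarith
  have hc1c2 : c1 < c2 := by simp only [hc1, hc2]; linarith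
  have hc2b : c2 ≤ b + L := by simp only [hb, hc2]; linarith
  have hint : ∀ a' b' : ℝ, IntervalIntegrable (fun x => g x * φ x) volume a' b' :=
    fun a' b' => hcont.intervalIntegrable _ _
  have hsplit : (∫ x in b..(b+L), g x * φ x) =
      (∫ x in b..c1, g x * φ x) + (∫ x in c1..c2, g x * φ x) + (∫ x in c2..(b+L), g x * φ x) := by
    rw [integral_add_adjacent_intervals (hint b c1) (hint c1 c2),
      integral_add_adjacent_intervals ((hint b c1).trans (hint c1 c2)) (hint c2 (b+L))]
  have h1 : 0 ≤ ∫ x in b..c1, g x * φ x :=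
    intervalIntegral.integral_nonneg hbc1 (fun x hx => hnn x ⟨hx.1, by
      simp only [hc1] at hx; linarith [hx.2]⟩)
  have h3 : 0 ≤ ∫ x in c2..(b+L), g x * φ x :=
    intervalIntegral.integral_nonneg hc2b (fun x hx => hnn x ⟨by
      simp only [hc2] at hx; linarith [hx.1], hx.2⟩)
  have h2 : 0 < ∫ x in c1..c2, g x * φ x := by
    apply intervalIntegral_pos_of_pos_on (hint c1 c2) _ hc1c2
    intro x hx
    apply hballρ
    rw [abs_lt]
    simp only [hc1, hc2] at hx
    constructor <;> [linarith [hx.1, hρ'ρ]; linarith [hx.2, hρ'ρ]]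
  rw [hshift, hsplit] at h0
  linarith

/-- An EVI solution is a strong solution (smooth stationary-in-time form): if `u` is a
smooth monotone periodic height profile and `w` a continuous periodic function such that
`∫₀^L w (u − v) dx ≤ φ(v) − φ(u)` for every smooth monotone periodic competitor `v`, where
`φ(v) = ∫₀^L exp(−(log v')') dx`, then `w = ((1/u')(e^{−(log u')'})')'` everywhere. -/
theorem stmt10 (L : ℝ) (hL : 0 < L) (u : ℝ → ℝ) (hu : ContDiff ℝ 4 u)
    (hupos : ∀ x, 0 < deriv u x) (huper : ∀ x, u (x + L) = u x + 1)
    (w : ℝ → ℝ) (hw : Continuous w) (hwper : ∀ x, w (x + L) = w x)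
    (hEVI : ∀ v : ℝ → ℝ, ContDiff ℝ 2 v → (∀ x, 0 < deriv v x) →
      (∀ x, v (x + L) = v x + 1) →
      (∫ x in (0:ℝ)..L, w x * (u x - v x)) ≤
        (∫ x in (0:ℝ)..L, Real.exp (-(deriv (fun y => Real.log (deriv v y)) x))) -
          ∫ x in (0:ℝ)..L, Real.exp (-(deriv (fun y => Real.log (deriv u y)) x))) :
    ∀ x : ℝ, w x = deriv (fun y => (1 / deriv u y) *
      deriv (fun z => Real.exp (-(deriv (fun s => Real.log (deriv u s)) z))) y) x := by
  -- regularity ladder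
  set u1 : ℝ → ℝ := deriv u with hu1def
  have hc1 : ContDiff ℝ 3 u1 ∧ Differentiable ℝ u := by
    have h := contDiff_succ_iff_deriv (n := 3) (f := u) (𝕜 := ℝ)
    rw [show (3 + 1 : WithTop ℕ∞) = 4 by norm_num] at h
    exact ⟨(h.mp hu).2.2, (h.mp hu).1⟩
  obtain ⟨hc1, hud⟩ := hc1
  set u2 : ℝ → ℝ := deriv u1 with hu2def
  have hc2 : ContDiff ℝ 2 u2 ∧ Differentiable ℝ u1 := by
    have h := contDiff_succ_iff_deriv (n := 2) (f := u1) (𝕜 := ℝ)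
    rw [show (2 + 1 : WithTop ℕ∞) = 3 by norm_num] at h
    exact ⟨(h.mp hc1).2.2, (h.mp hc1).1⟩
  obtain ⟨hc2, hu1d⟩ := hc2
  set u3 : ℝ → ℝ := deriv u2 with hu3def
  have hc3 : ContDiff ℝ 1 u3 ∧ Differentiable ℝ u2 := by
    have h := contDiff_succ_iff_deriv (n := 1) (f := u2) (𝕜 := ℝ)
    rw [show (1 + 1 : WithTop ℕ∞) = 2 by norm_num] at h
    exact ⟨(h.mp hc2).2.2, (h.mp hc2).1⟩
  obtain ⟨hc3, hu2d⟩ := hc3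
  have hne : ∀ x, u1 x ≠ 0 := fun x => (hupos x).ne'
  -- periodicity
  have hp1 : ∀ x, u1 (x + L) = u1 x := fun x => deriv_per huper x
  have hp2 : ∀ x, u2 (x + L) = u2 x :=
    fun x => deriv_per (c := 0) (fun y => by rw [hp1 y, add_zero]) x
  have hp3 : ∀ x, u3 (x + L) = u3 x :=
    fun x => deriv_per (c := 0) (fun y => by rw [hp2 y, add_zero]) x
  -- global lower bound on u1
  obtain ⟨y₀, hy₀⟩ := per_min hL hc1.continuous hp1
  set m : ℝ := u1 y₀ with hmdef
  have hm0 : 0 < m := hupos y₀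
  -- the log-derivative
  have hld : ∀ x, deriv (fun s => Real.log (u1 s)) x = u2 x / u1 x := fun x =>
    (((hu1d x).hasDerivAt).log (hne x)).deriv
  -- E and its derivative
  set E : ℝ → ℝ := fun x => Real.exp (-(u2 x / u1 x)) with hEdef
  have hEeq : (fun z => Real.exp (-(deriv (fun s => Real.log (u1 s)) z))) = E :=
    funext fun z => by rw [hld z]
  rw [hEeq]
  set E1 : ℝ → ℝ := fun x => E x * -((u3 x * u1 x - u2 x * u2 x) / u1 x ^ 2) with hE1def
  have hEder : ∀ x, HasDerivAt E (E1 x) x := by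
    intro x
    have hq : HasDerivAt (fun y => u2 y / u1 y)
        ((u3 x * u1 x - u2 x * u2 x) / u1 x ^ 2) x :=
      ((hu2d x).hasDerivAt).div ((hu1d x).hasDerivAt) (hne x)
    exact hq.neg.exp
  have hderE : deriv E = E1 := funext fun x => (hEder x).deriv
  rw [hderE]
  set G : ℝ → ℝ := fun y => 1 / u1 y * E1 y with hGdef
  -- regularity of E, E1, G
  have hEc : ContDiff ℝ 2 E := ((hc2.div (hc1.of_le (by norm_num)) hne).neg).exp
  have hE1c : ContDiff ℝ 1 E1 := by
    apply (hEc.of_le (by norm_num)).mul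
    exact (((hc3.mul (hc1.of_le (by norm_num))).sub
      ((hc2.of_le (by norm_num)).mul (hc2.of_le (by norm_num)))).div
      ((hc1.of_le (by norm_num)).pow 2) (fun x => pow_ne_zero 2 (hne x))).neg
  have hGc : ContDiff ℝ 1 G :=
    (contDiff_const.div (hc1.of_le (by norm_num)) hne).mul hE1c
  set F : ℝ → ℝ := deriv G with hFdef
  have hFcont : Continuous F := hGc.continuous_deriv le_rfl
  -- periodicity of E, E1, G, F
  have hpE : ∀ x, E (x + L) = E x := fun x => by simp only [hEdef, hp1 x, hp2 x]
  have hpE1 : ∀ x, E1 (x + L) = E1 x := fun x => by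
    simp only [hE1def, hp1 x, hp2 x, hp3 x, hpE x]
  have hpG : ∀ x, G (x + L) = G x := fun x => by simp only [hGdef, hp1 x, hpE1 x]
  have hpF : ∀ x, F (x + L) = F x :=
    fun x => deriv_per (c := 0) (fun y => by rw [hpG y, add_zero]) x
  -- the key variational identity
  have hkey : ∀ φ : ℝ → ℝ, ContDiff ℝ 2 φ → (∀ x, φ (x + L) = φ x) →
      (∫ x in (0:ℝ)..L, w x * φ x) = ∫ x in (0:ℝ)..L, F x * φ x := by
    intro φ hφc hφper
    set φ1 : ℝ → ℝ := deriv φ with hφ1def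
    have hφreg : Differentiable ℝ φ ∧ ContDiff ℝ 1 φ1 := by
      have h := contDiff_succ_iff_deriv (n := 1) (f := φ) (𝕜 := ℝ)
      rw [show (1 + 1 : WithTop ℕ∞) = 2 by norm_num] at h
      exact ⟨(h.mp hφc).1, (h.mp hφc).2.2⟩
    obtain ⟨hφd, hφ1c⟩ := hφreg
    set φ2 : ℝ → ℝ := deriv φ1 with hφ2def
    have hφ1d : Differentiable ℝ φ1 := (contDiff_one_iff_deriv.mp hφ1c).1
    have hφ2cont : Continuous φ2 := (contDiff_one_iff_deriv.mp hφ1c).2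
    have hpφ1 : ∀ x, φ1 (x + L) = φ1 x :=
      fun x => deriv_per (c := 0) (fun y => by rw [hφper y]; ring) x
    have hpφ2 : ∀ x, φ2 (x + L) = φ2 x :=
      fun x => deriv_per (c := 0) (fun y => by rw [hpφ1 y]; ring) x
    obtain ⟨M, hM0, hM⟩ := per_bound hL hφ1c.continuous hpφ1
    set ε₀ : ℝ := m / (2 * (M + 1)) with hε₀def
    have hε₀pos : 0 < ε₀ := by positivity
    have hden : ∀ e : ℝ, |e| ≤ ε₀ → ∀ x, m / 2 ≤ u1 x + e * φ1 x := by
      intro e he x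
      have h1 : |e * φ1 x| ≤ ε₀ * M := by
        rw [abs_mul]
        exact mul_le_mul he (hM x) (abs_nonneg _) hε₀pos.le
      have h2 : ε₀ * M ≤ m / 2 := by
        rw [hε₀def, div_mul_eq_mul_div, div_le_div_iff₀ (by positivity) two_pos]
        nlinarith
      have h3 := neg_abs_le (e * φ1 x)
      have h4 := hy₀ x
      linarith
    have hdpos : ∀ e : ℝ, |e| ≤ ε₀ → ∀ x, 0 < u1 x + e * φ1 x :=
      fun e he x => lt_of_lt_of_le (by linarith) (hden e he x)
    set N : ℝ → ℝ → ℝ := fun e x => Real.exp (-((u2 x + e * φ2 x) / (u1 x + e * φ1 x)))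
      with hNdef
    set N' : ℝ → ℝ → ℝ := fun e x => Real.exp (-((u2 x + e * φ2 x) / (u1 x + e * φ1 x))) *
      -((φ2 x * (u1 x + e * φ1 x) - (u2 x + e * φ2 x) * φ1 x) / (u1 x + e * φ1 x) ^ 2)
      with hN'def
    set ψ : ℝ → ℝ := fun e => ∫ x in (0:ℝ)..L, N e x with hψdef
    have hNcont : ∀ e : ℝ, |e| ≤ ε₀ → Continuous (N e) := by
      intro e he
      have h : Continuous (fun x => (u2 x + e * φ2 x) / (u1 x + e * φ1 x)) :=
        (hc2.continuous.add (continuous_const.mul hφ2cont)).div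
          (hc1.continuous.add (continuous_const.mul hφ1c.continuous))
          (fun x => (hdpos e he x).ne')
      exact Real.continuous_exp.comp h.neg
    have hN'cont0 : Continuous (N' 0) := by
      have h : Continuous (fun x => (u2 x + 0 * φ2 x) / (u1 x + 0 * φ1 x)) :=
        (hc2.continuous.add (continuous_const.mul hφ2cont)).div
          (hc1.continuous.add (continuous_const.mul hφ1c.continuous))
          (fun x => (hdpos 0 (by simpa using hε₀pos.le) x).ne')
      have h2 : Continuous (fun x => -((φ2 x * (u1 x + 0 * φ1 x) - (u2 x + 0 * φ2 x) * φ1 x)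
          / (u1 x + 0 * φ1 x) ^ 2)) := by
        apply Continuous.neg
        apply Continuous.div
        · exact (hφ2cont.mul (hc1.continuous.add (continuous_const.mul hφ1c.continuous))).sub
            ((hc2.continuous.add (continuous_const.mul hφ2cont)).mul hφ1c.continuous)
        · exact (hc1.continuous.add (continuous_const.mul hφ1c.continuous)).pow 2
        · exact fun x => pow_ne_zero 2 (hdpos 0 (by simpa using hε₀pos.le) x).ne'
      exact (Real.continuous_exp.comp h.neg).mul h2
    have h_diff : ∀ t : ℝ, ∀ e ∈ Metric.ball (0:ℝ) ε₀,
        HasDerivAt (fun e => N e t) (N' e t) e := by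
      intro t e he
      have he' : |e| ≤ ε₀ := by
        have := Metric.mem_ball.mp he
        rw [Real.dist_eq, sub_zero] at this
        exact this.le
      have hnum : HasDerivAt (fun e : ℝ => u2 t + e * φ2 t) (φ2 t) e := by
        simpa using ((hasDerivAt_id e).mul_const (φ2 t)).const_add (u2 t)
      have hdenom : HasDerivAt (fun e : ℝ => u1 t + e * φ1 t) (φ1 t) e := by
        simpa using ((hasDerivAt_id e).mul_const (φ1 t)).const_add (u1 t)
      have hne' : u1 t + e * φ1 t ≠ 0 := (hdpos e he' t).ne'
      exact ((hnum.div hdenom hne').neg).exp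
    -- uniform bound for N' on the compact parameter box
    have hScompact : IsCompact (Set.Icc (-ε₀) ε₀ ×ˢ Set.Icc (0:ℝ) L) :=
      isCompact_Icc.prod isCompact_Icc
    have hSne : (Set.Icc (-ε₀) ε₀ ×ˢ Set.Icc (0:ℝ) L).Nonempty :=
      ⟨(0, 0), by constructor <;> simp [hε₀pos.le, hL.le]⟩
    have hcontN' : ContinuousOn (fun p : ℝ × ℝ => N' p.1 p.2)
        (Set.Icc (-ε₀) ε₀ ×ˢ Set.Icc (0:ℝ) L) := by
      have hdc : Continuous (fun p : ℝ × ℝ => u1 p.2 + p.1 * φ1 p.2) :=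
        (hc1.continuous.comp continuous_snd).add
          (continuous_fst.mul (hφ1c.continuous.comp continuous_snd))
      have hnc : Continuous (fun p : ℝ × ℝ => u2 p.2 + p.1 * φ2 p.2) :=
        (hc2.continuous.comp continuous_snd).add
          (continuous_fst.mul (hφ2cont.comp continuous_snd))
      have hn2c : Continuous (fun p : ℝ × ℝ =>
          φ2 p.2 * (u1 p.2 + p.1 * φ1 p.2) - (u2 p.2 + p.1 * φ2 p.2) * φ1 p.2) :=
        ((hφ2cont.comp continuous_snd).mul hdc).sub
          (hnc.mul (hφ1c.continuous.comp continuous_snd))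
      have hdne : ∀ p ∈ Set.Icc (-ε₀) ε₀ ×ˢ Set.Icc (0:ℝ) L,
          u1 p.2 + p.1 * φ1 p.2 ≠ 0 := fun p hp =>
        (hdpos p.1 (abs_le.mpr ⟨hp.1.1, hp.1.2⟩) p.2).ne'
      exact (Real.continuous_exp.comp_continuousOn
        ((hnc.continuousOn.div hdc.continuousOn hdne).neg)).mul
        ((hn2c.continuousOn.div (hdc.pow 2).continuousOn
          (fun p hp => pow_ne_zero 2 (hdne p hp))).neg)
    obtain ⟨p₀, hp₀S, hp₀max⟩ := hScompact.exists_isMaxOn hSne hcontN'.norm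
    have hp₀max' : ∀ q ∈ Set.Icc (-ε₀) ε₀ ×ˢ Set.Icc (0:ℝ) L,
        ‖N' q.1 q.2‖ ≤ ‖N' p₀.1 p₀.2‖ := isMaxOn_iff.mp hp₀max
    -- differentiability of ψ at 0
    have hψder : HasDerivAt ψ (∫ t in (0:ℝ)..L, N' 0 t) 0 := by
      have hmeas : ∀ᶠ e in nhds (0:ℝ),
          AEStronglyMeasurable (N e) (volume.restrict (Set.uIoc (0:ℝ) L)) := by
        apply Filter.eventually_of_mem (Metric.ball_mem_nhds (0:ℝ) hε₀pos)
        intro e he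
        have he' : |e| ≤ ε₀ := by
          have := Metric.mem_ball.mp he
          rw [Real.dist_eq, sub_zero] at this
          exact this.le
        exact (hNcont e he').aestronglyMeasurable
      have hint : IntervalIntegrable (N 0) volume 0 L :=
        (hNcont 0 (by simpa using hε₀pos.le)).intervalIntegrable _ _
      have h'meas : AEStronglyMeasurable (N' 0) (volume.restrict (Set.uIoc (0:ℝ) L)) :=
        hN'cont0.aestronglyMeasurable
      have hbound : ∀ᵐ t ∂volume, t ∈ Set.uIoc (0:ℝ) L →
          ∀ e ∈ Metric.ball (0:ℝ) ε₀, ‖N' e t‖ ≤ ‖N' p₀.1 p₀.2‖ := by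
        apply Filter.Eventually.of_forall
        intro t ht e he
        have ht' : t ∈ Set.Icc (0:ℝ) L := by
          rw [Set.uIoc_of_le hL.le] at ht; exact ⟨ht.1.le, ht.2⟩
        have he' : |e| ≤ ε₀ := by
          have := Metric.mem_ball.mp he
          rw [Real.dist_eq, sub_zero] at this
          exact this.le
        exact hp₀max' (e, t) ⟨abs_le.mp he', ht'⟩
      have hbint : IntervalIntegrable (fun _ : ℝ => ‖N' p₀.1 p₀.2‖) volume 0 L :=
        intervalIntegrable_const
      have hdiff' : ∀ᵐ t ∂volume, t ∈ Set.uIoc (0:ℝ) L →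
          ∀ e ∈ Metric.ball (0:ℝ) ε₀, HasDerivAt (fun e => N e t) (N' e t) e :=
        Filter.Eventually.of_forall (fun t _ e he => h_diff t e he)
      exact (intervalIntegral.hasDerivAt_integral_of_dominated_loc_of_deriv_le (Metric.ball_mem_nhds (0:ℝ) hε₀pos)
        hmeas hint h'meas hbound hbint hdiff').2
    -- the variational inequality for the perturbed profiles
    have hineq : ∀ e ∈ Metric.ball (0:ℝ) ε₀,
        -e * (∫ x in (0:ℝ)..L, w x * φ x) - (ψ e - ψ 0) ≤ 0 := by
      intro e he
      have he' : |e| ≤ ε₀ := by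
        have := Metric.mem_ball.mp he
        rw [Real.dist_eq, sub_zero] at this
        exact this.le
      have hvc : ContDiff ℝ 2 (fun x => u x + e * φ x) :=
        (hu.of_le (by norm_num)).add (contDiff_const.mul hφc)
      have hvderiv : deriv (fun x => u x + e * φ x) = fun x => u1 x + e * φ1 x := by
        funext z
        rw [deriv_fun_add (hud z) ((hφd z).const_mul e), deriv_const_mul e (hφd z)]
      have hvpos : ∀ x, 0 < deriv (fun x => u x + e * φ x) x := by
        intro z; rw [hvderiv]; exact hdpos e he' z
      have hvper : ∀ x, (fun x => u x + e * φ x) (x + L) = (fun x => u x + e * φ x) x + 1 := by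
        intro z; show u (z + L) + e * φ (z + L) = u z + e * φ z + 1
        rw [huper z, hφper z]; ring
      have h := hEVI _ hvc hvpos hvper
      have hA : (∫ x in (0:ℝ)..L, w x * (u x - (u x + e * φ x))) =
          -e * ∫ x in (0:ℝ)..L, w x * φ x := by
        rw [← intervalIntegral.integral_const_mul]
        apply intervalIntegral.integral_congr
        intro z _
        show w z * (u z - (u z + e * φ z)) = -e * (w z * φ z)
        ring
      have hB : (∫ x in (0:ℝ)..L,
          Real.exp (-(deriv (fun y => Real.log (deriv (fun x => u x + e * φ x) y)) x))) = ψ e := by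
        rw [hψdef]
        apply intervalIntegral.integral_congr
        intro z _
        have hdl : deriv (fun y => Real.log (deriv (fun x => u x + e * φ x) y)) z =
            (u2 z + e * φ2 z) / (u1 z + e * φ1 z) := by
          rw [hvderiv]
          have hd : HasDerivAt (fun y => u1 y + e * φ1 y) (u2 z + e * φ2 z) z :=
            ((hu1d z).hasDerivAt).add (((hφ1d z).hasDerivAt).const_mul e)
          exact (hd.log (hdpos e he' z).ne').deriv
        show Real.exp (-(deriv (fun y => Real.log (deriv (fun x => u x + e * φ x) y)) z)) = N e z
        rw [hdl, hNdef]
      have hC : (∫ x in (0:ℝ)..L, Real.exp (-(deriv (fun y => Real.log (u1 y)) x))) = ψ 0 := by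
        rw [hψdef]
        apply intervalIntegral.integral_congr
        intro z _
        show Real.exp (-(deriv (fun s => Real.log (u1 s)) z)) = N 0 z
        rw [hld z, hNdef]
        norm_num
      rw [hA, hB, hC] at h
      linarith
    -- local max argument
    have hmaxloc : IsLocalMax
        (fun e => -e * (∫ x in (0:ℝ)..L, w x * φ x) - (ψ e - ψ 0)) 0 := by
      apply Filter.eventually_of_mem (Metric.ball_mem_nhds (0:ℝ) hε₀pos)
      intro e he
      have := hineq e he
      simpa using this
    have hder0 : HasDerivAt
        (fun e => -e * (∫ x in (0:ℝ)..L, w x * φ x) - (ψ e - ψ 0))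
        (-1 * (∫ x in (0:ℝ)..L, w x * φ x) - ∫ t in (0:ℝ)..L, N' 0 t) 0 :=
      ((hasDerivAt_id (0:ℝ)).neg.mul_const _).sub (hψder.sub_const (ψ 0))
    have heq0 := hmaxloc.hasDerivAt_eq_zero hder0
    have hI : (∫ x in (0:ℝ)..L, w x * φ x) = - ∫ t in (0:ℝ)..L, N' 0 t := by linarith
    -- step 13a: the integral identity with the first variation
    have h13a : (∫ x in (0:ℝ)..L, w x * φ x) =
        ∫ x in (0:ℝ)..L, E x * ((φ2 x * u1 x - u2 x * φ1 x) / u1 x ^ 2) := by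
      rw [hI, ← intervalIntegral.integral_neg]
      apply intervalIntegral.integral_congr
      intro z _
      show -(N' 0 z) = E z * ((φ2 z * u1 z - u2 z * φ1 z) / u1 z ^ 2)
      rw [hN'def, hEdef]
      norm_num
    -- step 13b: integration by parts, twice
    set P : ℝ → ℝ := fun x => φ1 x / u1 x with hPdef
    have hPder : ∀ x, HasDerivAt P ((φ2 x * u1 x - φ1 x * u2 x) / u1 x ^ 2) x := fun x =>
      ((hφ1d x).hasDerivAt).div ((hu1d x).hasDerivAt) (hne x)
    have hrcont : Continuous (fun x => (φ2 x * u1 x - φ1 x * u2 x) / u1 x ^ 2) :=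
      ((hφ2cont.mul hc1.continuous).sub (hφ1c.continuous.mul hc2.continuous)).div
        (hc1.continuous.pow 2) (fun x => pow_ne_zero 2 (hne x))
    have hibp1 : (∫ x in (0:ℝ)..L, E x * ((φ2 x * u1 x - u2 x * φ1 x) / u1 x ^ 2)) =
        - ∫ x in (0:ℝ)..L, E1 x * P x := by
      have h := intervalIntegral.integral_mul_deriv_eq_deriv_mul
        (u := E) (u' := E1) (v := P)
        (v' := fun x => (φ2 x * u1 x - φ1 x * u2 x) / u1 x ^ 2) (a := 0) (b := L)
        (fun x _ => hEder x) (fun x _ => hPder x)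
        (hE1c.continuous.intervalIntegrable _ _) (hrcont.intervalIntegrable _ _)
      have hEL : E L = E 0 := by have := hpE 0; simpa using this
      have hPL : P L = P 0 := by
        have h1 : u1 L = u1 0 := by have := hp1 0; simpa using this
        have h2 : φ1 L = φ1 0 := by have := hpφ1 0; simpa using this
        rw [hPdef]; simp only [h1, h2]
      have hcongr : (∫ x in (0:ℝ)..L, E x * ((φ2 x * u1 x - u2 x * φ1 x) / u1 x ^ 2)) =
          ∫ x in (0:ℝ)..L, E x * ((φ2 x * u1 x - φ1 x * u2 x) / u1 x ^ 2) := by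
        apply intervalIntegral.integral_congr
        intro z _
        ring_nf
      rw [hcongr, h, hEL, hPL]
      ring
    have hib_mid : (∫ x in (0:ℝ)..L, E1 x * P x) = ∫ x in (0:ℝ)..L, G x * φ1 x := by
      apply intervalIntegral.integral_congr
      intro z _
      show E1 z * P z = G z * φ1 z
      rw [hPdef, hGdef]
      ring
    have hibp2 : (∫ x in (0:ℝ)..L, G x * φ1 x) = - ∫ x in (0:ℝ)..L, F x * φ x := by
      have h := intervalIntegral.integral_mul_deriv_eq_deriv_mul
        (u := G) (u' := F) (v := φ) (v' := φ1) (a := 0) (b := L)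
        (fun x _ => ((hGc.differentiable one_ne_zero) x).hasDerivAt)
        (fun x _ => (hφd x).hasDerivAt)
        (hFcont.intervalIntegrable _ _) (hφ1c.continuous.intervalIntegrable _ _)
      have hGL : G L = G 0 := by have := hpG 0; simpa using this
      have hφL : φ L = φ 0 := by have := hφper 0; simpa using this
      rw [h, hGL, hφL]
      have : (∫ x in (0:ℝ)..L, F x * φ x) = ∫ x in (0:ℝ)..L, F x * φ x := rfl
      ring
    rw [h13a, hibp1, hib_mid, hibp2, neg_neg]
  -- conclude via the fundamental lemma
  intro x
  have hzero : ∀ φ : ℝ → ℝ, ContDiff ℝ 2 φ → (∀ x, φ (x + L) = φ x) →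
      (∫ t in (0:ℝ)..L, (w t - F t) * φ t) = 0 := by
    intro φ hφc hφper
    have h1 := hkey φ hφc hφper
    have h2 : (∫ t in (0:ℝ)..L, (w t - F t) * φ t) =
        (∫ t in (0:ℝ)..L, w t * φ t) - ∫ t in (0:ℝ)..L, F t * φ t := by
      rw [← intervalIntegral.integral_sub (f := fun t => w t * φ t) (g := fun t => F t * φ t)
        ((hw.mul hφc.continuous).intervalIntegrable _ _)
        ((hFcont.mul hφc.continuous).intervalIntegrable _ _)]
      congr 1; funext t; ring
    rw [h2, h1, sub_self]
  have hle := key_pos hL (fun t => w t - F t) (hw.sub hFcont)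
    (fun t => by show w (t+L) - F (t+L) = _; rw [hwper t, hpF t]) hzero x
  have hge := key_pos hL (fun t => F t - w t) (hFcont.sub hw)
    (fun t => by show F (t+L) - w (t+L) = _; rw [hwper t, hpF t])
    (fun φ hφc hφper => by
      have := hzero φ hφc hφper
      rw [← neg_eq_zero, ← intervalIntegral.integral_neg] at this
      rw [← this]; congr 1; funext t; ring) x
  linarith
end

section
/- Let L > 0. Let u : ℝ → ℝ be four times continuously differentiable with u'(x) > 0 for all x and u(x+L) = u(x) + 1 for all x, and let v : ℝ → ℝ be a twice continuously differentiable L-periodic function. For ε small enough that u' + εv' > 0 on ℝ, define F(ε) := ∫₀^L exp(−(d/dx) log(u'(x) + εv'(x))) dx. Then F is differentiable at ε = 0 with F'(0) = −∫₀^L (d/dx)[ (1/u'(x)) · (d/dx) exp(−(d/dx) log u'(x)) ] · v(x) dx. -/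
open Real MeasureTheory intervalIntegral Set Function

/-- First variation of the energy `φ(h) = ∫₀^L exp(−(log h')') dx` at a smooth monotone
periodic profile `u` in the direction of a smooth periodic function `v`:
`F(ε) = ∫₀^L exp(−(log(u' + εv'))') dx` is differentiable at `ε = 0` with
`F'(0) = −∫₀^L ((1/u')(e^{−(log u')'})')' v dx`. -/
theorem stmt11 (L : ℝ) (hL : 0 < L) (u : ℝ → ℝ) (hu : ContDiff ℝ 4 u)
    (hupos : ∀ x, 0 < deriv u x) (huper : ∀ x, u (x + L) = u x + 1)
    (v : ℝ → ℝ) (hv : ContDiff ℝ 2 v) (hvper : ∀ x, v (x + L) = v x)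
    (F : ℝ → ℝ)
    (hF : ∀ ε : ℝ, F ε = ∫ x in (0:ℝ)..L,
      Real.exp (-(deriv (fun y => Real.log (deriv u y + ε * deriv v y)) x))) :
    HasDerivAt F
      (-(∫ x in (0:ℝ)..L,
        deriv (fun y => (1 / deriv u y) *
          deriv (fun z => Real.exp (-(deriv (fun s => Real.log (deriv u s)) z))) y) x
          * v x)) 0 := by
  -- ## Notation and regularity
  set w := deriv u with hw_def
  set w1 := deriv w with hw1_def
  set w2 := deriv w1 with hw2_def
  set w3 := deriv w2 with hw3_def
  set p := deriv v with hp_def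
  set p1 := deriv p with hp1_def
  have hw : ContDiff ℝ 3 w := by
    have : ContDiff ℝ ((3 : ℕ) + 1) u := by exact_mod_cast hu
    exact (contDiff_succ_iff_deriv.mp this).2.2
  have hw1 : ContDiff ℝ 2 w1 := by
    have : ContDiff ℝ ((2 : ℕ) + 1) w := by exact_mod_cast hw
    exact (contDiff_succ_iff_deriv.mp this).2.2
  have hw2 : ContDiff ℝ 1 w2 := by
    have : ContDiff ℝ ((1 : ℕ) + 1) w1 := by exact_mod_cast hw1
    exact (contDiff_succ_iff_deriv.mp this).2.2
  have hp : ContDiff ℝ 1 p := by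
    have : ContDiff ℝ ((1 : ℕ) + 1) v := by exact_mod_cast hv
    exact (contDiff_succ_iff_deriv.mp this).2.2
  have dw : Differentiable ℝ w := hw.differentiable (by norm_num)
  have dw1 : Differentiable ℝ w1 := hw1.differentiable (by norm_num)
  have dw2 : Differentiable ℝ w2 := hw2.differentiable (by norm_num)
  have dp : Differentiable ℝ p := hp.differentiable (by norm_num)
  have cw : Continuous w := hw.continuous
  have cw1 : Continuous w1 := hw1.continuous
  have cw2 : Continuous w2 := hw2.continuous
  have cw3 : Continuous w3 := (contDiff_one_iff_deriv.mp hw2).2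
  have cp : Continuous p := hp.continuous
  have cp1 : Continuous p1 := (contDiff_one_iff_deriv.mp hp).2
  have cv : Continuous v := hv.continuous
  have hwpos : ∀ x, 0 < w x := hupos
  have hwne : ∀ x, w x ≠ 0 := fun x => (hwpos x).ne'
  -- ## Periodicity
  have perDeriv : ∀ f : ℝ → ℝ, Function.Periodic f L → Function.Periodic (deriv f) L := by
    intro f hf x
    have h1 : deriv (fun y => f (y + L)) x = deriv f x := by
      congr 1; funext y; exact hf y
    simpa [deriv_comp_add_const] using h1
  have Pw : Function.Periodic w L := by
    intro x
    have h1 : deriv (fun y => u (y + L)) x = deriv (fun y => u y + 1) x := by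
      congr 1; funext y; exact huper y
    rw [deriv_comp_add_const, deriv_add_const] at h1
    exact h1
  have Pw1 : Function.Periodic w1 L := perDeriv w Pw
  have Pw2 : Function.Periodic w2 L := perDeriv w1 Pw1
  have Pv : Function.Periodic v L := hvper
  have Pp : Function.Periodic p L := perDeriv v Pv
  have Pp1 : Function.Periodic p1 L := perDeriv p Pp
  -- ## Bounds from periodicity and compactness
  have lbdd : ∃ m > 0, ∀ x, m ≤ w x := by
    obtain ⟨x₀, hx₀, hmin⟩ := isCompact_Icc.exists_isMinOn (Set.nonempty_Icc.mpr hL.le)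
      (cw.continuousOn (s := Icc 0 L))
    refine ⟨w x₀, hwpos x₀, fun x => ?_⟩
    obtain ⟨y, hy, hxy⟩ := Pw.exists_mem_Ico₀ hL x
    rw [hxy]
    exact hmin (Ico_subset_Icc_self hy)
  have ubdd : ∀ f : ℝ → ℝ, Continuous f → Function.Periodic f L → ∃ M, ∀ x, |f x| ≤ M := by
    intro f cf Pf
    obtain ⟨x₀, hx₀, hmax⟩ := isCompact_Icc.exists_isMaxOn (Set.nonempty_Icc.mpr hL.le)
      ((cf.abs).continuousOn (s := Icc 0 L))
    refine ⟨|f x₀|, fun x => ?_⟩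
    obtain ⟨y, hy, hxy⟩ := Pf.exists_mem_Ico₀ hL x
    rw [hxy]
    exact hmax (Ico_subset_Icc_self hy)
  obtain ⟨m, hm, hwm⟩ := lbdd
  obtain ⟨Mp, hMp⟩ := ubdd p cp Pp
  obtain ⟨Mp1, hMp1⟩ := ubdd p1 cp1 Pp1
  obtain ⟨Mw, hMw⟩ := ubdd w cw Pw
  obtain ⟨Mw1, hMw1⟩ := ubdd w1 cw1 Pw1
  have hMp0 : 0 ≤ Mp := le_trans (abs_nonneg _) (hMp 0)
  have hMp10 : 0 ≤ Mp1 := le_trans (abs_nonneg _) (hMp1 0)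
  -- choice of δ
  set δ : ℝ := m / (2 * (Mp + 1)) with hδ_def
  have hδpos : 0 < δ := by positivity
  have hposden : ∀ ε : ℝ, |ε| < δ → ∀ x, m / 2 ≤ w x + ε * p x := by
    intro ε hε x
    have h1 : |ε * p x| ≤ δ * Mp := by
      rw [abs_mul]
      exact mul_le_mul hε.le (hMp x) (abs_nonneg _) hδpos.le
    have h2 : δ * Mp ≤ m / 2 := by
      rw [hδ_def, div_mul_eq_mul_div, div_le_div_iff₀ (by positivity) (by norm_num)]
      nlinarith
    have h3 : -(m / 2) ≤ ε * p x := by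
      have := (abs_le.mp (h1.trans h2)).1; linarith
    have := hwm x; linarith
  have hpos : ∀ ε : ℝ, |ε| < δ → ∀ x, 0 < w x + ε * p x := by
    intro ε hε x
    have := hposden ε hε x; linarith
  -- ## The derivative of the logarithm
  have hlog : ∀ ε : ℝ, |ε| < δ → ∀ x,
      deriv (fun y => Real.log (w y + ε * p y)) x = (w1 x + ε * p1 x) / (w x + ε * p x) := by
    intro ε hε x
    have h1 : HasDerivAt (fun y => w y + ε * p y) (w1 x + ε * p1 x) x :=
      (dw x).hasDerivAt.add ((dp x).hasDerivAt.const_mul ε)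
    exact (h1.log (hpos ε hε x).ne').deriv
  -- ## Nice form of the functional and its ε-derivative
  set Φ : ℝ → ℝ → ℝ := fun ε x => Real.exp (-((w1 x + ε * p1 x) / (w x + ε * p x))) with hΦ_def
  set Φ' : ℝ → ℝ → ℝ := fun ε x => Real.exp (-((w1 x + ε * p1 x) / (w x + ε * p x))) *
    (-((p1 x * (w x + ε * p x) - (w1 x + ε * p1 x) * p x) / (w x + ε * p x) ^ 2)) with hΦ'_def
  have hΦdiff : ∀ x : ℝ, ∀ ε ∈ Metric.ball (0:ℝ) δ, HasDerivAt (fun e => Φ e x) (Φ' ε x) ε := by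
    intro x ε hε
    rw [Metric.mem_ball, dist_zero_right] at hε
    have hnum : HasDerivAt (fun e : ℝ => w1 x + e * p1 x) (p1 x) ε := by
      simpa using ((hasDerivAt_id ε).mul_const (p1 x)).const_add (w1 x)
    have hden : HasDerivAt (fun e : ℝ => w x + e * p x) (p x) ε := by
      simpa using ((hasDerivAt_id ε).mul_const (p x)).const_add (w x)
    exact ((hnum.div hden (hpos ε hε x).ne').neg).exp
  -- continuity of Φ ε and Φ' ε in x, for |ε| < δ
  have cΦ : ∀ ε : ℝ, |ε| < δ → Continuous (Φ ε) := by
    intro ε hε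
    exact ((((cw1.add (continuous_const.mul cp1)).div (cw.add (continuous_const.mul cp))
      (fun x => (hpos ε hε x).ne')).neg).rexp)
  have cΦ' : ∀ ε : ℝ, |ε| < δ → Continuous (Φ' ε) := by
    intro ε hε
    have hd : Continuous fun x => w x + ε * p x := cw.add (continuous_const.mul cp)
    have hn : Continuous fun x => w1 x + ε * p1 x := cw1.add (continuous_const.mul cp1)
    have hne : ∀ x, w x + ε * p x ≠ 0 := fun x => (hpos ε hε x).ne'
    exact ((hn.div hd hne).neg.rexp).mul
      (((cp1.mul hd).sub (hn.mul cp)).div (hd.pow 2)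
        (fun x => pow_ne_zero 2 (hne x))).neg
  -- bound
  have hMw0 : 0 ≤ Mw := le_trans (abs_nonneg _) (hMw 0)
  have hMw10 : 0 ≤ Mw1 := le_trans (abs_nonneg _) (hMw1 0)
  have hC2num : 0 ≤ Mp1 * (Mw + δ * Mp) + (Mw1 + δ * Mp1) * Mp :=
    add_nonneg (mul_nonneg hMp10 (add_nonneg hMw0 (mul_nonneg hδpos.le hMp0)))
      (mul_nonneg (add_nonneg hMw10 (mul_nonneg hδpos.le hMp10)) hMp0)
  have hbound : ∀ x : ℝ, ∀ ε ∈ Metric.ball (0:ℝ) δ,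
      ‖Φ' ε x‖ ≤ Real.exp ((Mw1 + δ * Mp1) / (m / 2)) *
        ((Mp1 * (Mw + δ * Mp) + (Mw1 + δ * Mp1) * Mp) / (m / 2) ^ 2) := by
    intro x ε hε
    rw [Metric.mem_ball, dist_zero_right] at hε
    have hden := hposden ε hε x
    have hdenpos : 0 < w x + ε * p x := lt_of_lt_of_le (by positivity) hden
    have hnum : |w1 x + ε * p1 x| ≤ Mw1 + δ * Mp1 := by
      calc |w1 x + ε * p1 x| ≤ |w1 x| + |ε * p1 x| := abs_add_le _ _
        _ ≤ Mw1 + δ * Mp1 := by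
            rw [abs_mul]
            exact add_le_add (hMw1 x) (mul_le_mul hε.le (hMp1 x) (abs_nonneg _) hδpos.le)
    have hdenabs : w x + ε * p x ≤ Mw + δ * Mp := by
      refine le_trans (le_abs_self _) ?_
      calc |w x + ε * p x| ≤ |w x| + |ε * p x| := abs_add_le _ _
        _ ≤ Mw + δ * Mp := by
            rw [abs_mul]
            exact add_le_add (hMw x) (mul_le_mul hε.le (hMp x) (abs_nonneg _) hδpos.le)
    rw [hΦ'_def]
    simp only [norm_mul, norm_neg, Real.norm_eq_abs, abs_div]
    rw [abs_of_pos (Real.exp_pos _), abs_of_nonneg (sq_nonneg (w x + ε * p x))]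
    refine mul_le_mul ?_ ?_ (by positivity) (Real.exp_pos _).le
    · rw [Real.exp_le_exp, neg_div']
      exact div_le_div₀ (le_trans (abs_nonneg _) hnum) ((neg_le_abs _).trans hnum)
        (by positivity) hden
    · refine div_le_div₀ hC2num ?_ (by positivity)
        (pow_le_pow_left₀ (by positivity) hden 2)
      calc |p1 x * (w x + ε * p x) - (w1 x + ε * p1 x) * p x|
          ≤ |p1 x * (w x + ε * p x)| + |(w1 x + ε * p1 x) * p x| := abs_sub _ _
        _ ≤ Mp1 * (Mw + δ * Mp) + (Mw1 + δ * Mp1) * Mp := by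
            rw [abs_mul, abs_mul, abs_of_pos hdenpos]
            exact add_le_add (mul_le_mul (hMp1 x) hdenabs hdenpos.le hMp10)
              (mul_le_mul hnum (hMp x) (abs_nonneg _) (le_trans (abs_nonneg _) hnum))
  -- ## Differentiation under the integral sign
  have main := intervalIntegral.hasDerivAt_integral_of_dominated_loc_of_deriv_le
    (F := Φ) (F' := Φ') (a := (0:ℝ)) (b := L) (μ := volume) (x₀ := (0:ℝ))
    (bound := fun _ => Real.exp ((Mw1 + δ * Mp1) / (m / 2)) *
        ((Mp1 * (Mw + δ * Mp) + (Mw1 + δ * Mp1) * Mp) / (m / 2) ^ 2))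
    (Metric.ball_mem_nhds (0:ℝ) hδpos)
    (by
      filter_upwards [Metric.ball_mem_nhds (0:ℝ) hδpos] with ε hε
      rw [Metric.mem_ball, dist_zero_right] at hε
      exact (cΦ ε hε).aestronglyMeasurable)
    ((cΦ 0 (by simpa using hδpos)).intervalIntegrable 0 L)
    ((cΦ' 0 (by simpa using hδpos)).aestronglyMeasurable)
    (ae_of_all _ fun x _ ε hε => hbound x ε hε)
    intervalIntegrable_const
    (ae_of_all _ fun x _ ε hε => hΦdiff x ε hε)
  have hG : HasDerivAt (fun ε => ∫ x in (0:ℝ)..L, Φ ε x) (∫ x in (0:ℝ)..L, Φ' 0 x) 0 := main.2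
  -- F agrees with the nice functional near 0
  have hFG : F =ᶠ[nhds (0:ℝ)] fun ε => ∫ x in (0:ℝ)..L, Φ ε x := by
    filter_upwards [Metric.ball_mem_nhds (0:ℝ) hδpos] with ε hε
    rw [Metric.mem_ball, dist_zero_right] at hε
    rw [hF ε]
    refine intervalIntegral.integral_congr fun x _ => ?_
    rw [hlog ε hε x]
  have hFd : HasDerivAt F (∫ x in (0:ℝ)..L, Φ' 0 x) 0 := hG.congr_of_eventuallyEq hFG
  -- ## The functions appearing in the first variation
  set E : ℝ → ℝ := fun x => Real.exp (-(w1 x / w x)) with hE_def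
  set q : ℝ → ℝ := fun x => p x / w x with hq_def
  set qd : ℝ → ℝ := fun x => (p1 x * w x - p x * w1 x) / w x ^ 2 with hqd_def
  set A : ℝ → ℝ := fun y => 1 / w y * deriv E y with hA_def
  have hwC2 : ContDiff ℝ 2 w := hw.of_le (by norm_num)
  have hE2 : ContDiff ℝ 2 E := Real.contDiff_exp.comp ((hw1.div hwC2 hwne).neg)
  have hdE : ContDiff ℝ 1 (deriv E) := by
    have : ContDiff ℝ ((1 : ℕ) + 1) E := by exact_mod_cast hE2
    exact (contDiff_succ_iff_deriv.mp this).2.2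
  have hAC : ContDiff ℝ 1 A := (contDiff_const.div (hw.of_le (by norm_num)) hwne).mul hdE
  have dE : Differentiable ℝ E := hE2.differentiable (by norm_num)
  have ddE : Differentiable ℝ (deriv E) := hdE.differentiable one_ne_zero
  have dA : Differentiable ℝ A := hAC.differentiable one_ne_zero
  have cdE : Continuous (deriv E) := hdE.continuous
  have cdA : Continuous (deriv A) := (contDiff_one_iff_deriv.mp hAC).2
  have cqd : Continuous qd := ((cp1.mul cw).sub (cp.mul cw1)).div (cw.pow 2)
    (fun x => pow_ne_zero _ (hwne x))
  have hqder : ∀ x, HasDerivAt q (qd x) x := fun x =>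
    (dp x).hasDerivAt.div (dw x).hasDerivAt (hwne x)
  -- periodicity of the relevant functions
  have PE : Function.Periodic E L := by
    intro x; simp only [hE_def]; rw [Pw1 x, Pw x]
  have PdE : Function.Periodic (deriv E) L := perDeriv E PE
  have PA : Function.Periodic A L := by
    intro x; simp only [hA_def]; rw [Pw x, PdE x]
  have hEL : E L = E 0 := by have := PE 0; rwa [zero_add] at this
  have hqL : q L = q 0 := by
    have h1 : p L = p 0 := by have := Pp 0; rwa [zero_add] at this
    have h2 : w L = w 0 := by have := Pw 0; rwa [zero_add] at this
    simp only [hq_def]; rw [h1, h2]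
  have hAL : A L = A 0 := by have := PA 0; rwa [zero_add] at this
  have hvL : v L = v 0 := by have := Pv 0; rwa [zero_add] at this
  -- identify the target integrand
  have hlogw : ∀ z, deriv (fun s => Real.log (w s)) z = w1 z / w z := fun z =>
    ((dw z).hasDerivAt.log (hwne z)).deriv
  have hEfun : (fun z => Real.exp (-(deriv (fun s => Real.log (w s)) z))) = E := by
    funext z; rw [hlogw z]
  have hAfun : (fun y => 1 / w y *
      deriv (fun z => Real.exp (-(deriv (fun s => Real.log (w s)) z))) y) = A := by
    funext y; rw [hEfun]
  -- ## Integration by parts, twice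
  have ibp1 : ∫ x in (0:ℝ)..L, A x * p x
      = A L * v L - A 0 * v 0 - ∫ x in (0:ℝ)..L, deriv A x * v x :=
    integral_mul_deriv_eq_deriv_mul (fun x _ => (dA x).hasDerivAt)
      (fun x _ => ((hv.differentiable (by norm_num)) x).hasDerivAt)
      (cdA.intervalIntegrable 0 L) (cp.intervalIntegrable 0 L)
  have ibp2 : ∫ x in (0:ℝ)..L, E x * qd x
      = E L * q L - E 0 * q 0 - ∫ x in (0:ℝ)..L, deriv E x * q x :=
    integral_mul_deriv_eq_deriv_mul (fun x _ => (dE x).hasDerivAt)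
      (fun x _ => hqder x)
      (cdE.intervalIntegrable 0 L) (cqd.intervalIntegrable 0 L)
  have key : (∫ x in (0:ℝ)..L, Φ' 0 x) = -(∫ x in (0:ℝ)..L, deriv A x * v x) := by
    calc (∫ x in (0:ℝ)..L, Φ' 0 x) = ∫ x in (0:ℝ)..L, -(E x * qd x) := by
          refine intervalIntegral.integral_congr fun x _ => ?_
          simp only [hΦ'_def, hE_def, hqd_def, zero_mul, add_zero]
          ring
      _ = -∫ x in (0:ℝ)..L, E x * qd x := intervalIntegral.integral_neg
      _ = -(E L * q L - E 0 * q 0 - ∫ x in (0:ℝ)..L, deriv E x * q x) := by rw [ibp2]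
      _ = ∫ x in (0:ℝ)..L, deriv E x * q x := by rw [hEL, hqL]; ring
      _ = ∫ x in (0:ℝ)..L, A x * p x := by
          refine intervalIntegral.integral_congr fun x _ => ?_
          simp only [hA_def, hq_def]
          ring
      _ = A L * v L - A 0 * v 0 - ∫ x in (0:ℝ)..L, deriv A x * v x := ibp1
      _ = -(∫ x in (0:ℝ)..L, deriv A x * v x) := by rw [hAL, hvL]; ring
  rw [hAfun, ← key]
  exact hFd
end

section
/- Let (X, λ) be a finite measure space and let a, b, p, q : X → ℝ be measurable. Assume there are constants 0 < c₁ ≤ c₂ and P, Q, c ≥ 0 such that c₁ ≤ a(x) ≤ c₂, |p(x)| ≤ P, |q(x)| ≤ Q and |b(x) p(x)| ≤ c for all x ∈ X, and that x ↦ exp(−b(x)/a(x)) is integrable with respect to λ. Then there exist ε₀ > 0 and C < ∞ such that for every ε ∈ (0, ε₀), the function x ↦ exp(−(b(x) + ε q(x))/(a(x) + ε p(x))) is integrable with respect to λ and ∫_X exp(−(b + εq)/(a + εp)) dλ ≤ C. -/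
open MeasureTheory

set_option maxHeartbeats 1000000 in
/-- Uniform integrability estimate for the perturbed energy density: under pointwise
bounds `c₁ ≤ a ≤ c₂`, `|p| ≤ P`, `|q| ≤ Q`, `|bp| ≤ c` and integrability of
`exp(−b/a)`, there exist `ε₀ > 0` and a finite constant `C` such that for every
`ε ∈ (0, ε₀)` the function `exp(−(b+εq)/(a+εp))` is integrable with integral at most `C`. -/
theorem stmt12 {X : Type*} [MeasurableSpace X] (lam : Measure X) [IsFiniteMeasure lam]
    (a b p q : X → ℝ) (ha : Measurable a) (hb : Measurable b) (hp : Measurable p)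
    (hq : Measurable q)
    (c₁ c₂ P Q c : ℝ) (hc₁ : 0 < c₁) (hc₁₂ : c₁ ≤ c₂)
    (hP : 0 ≤ P) (hQ : 0 ≤ Q) (hc : 0 ≤ c)
    (hab : ∀ x, c₁ ≤ a x ∧ a x ≤ c₂) (hpb : ∀ x, |p x| ≤ P) (hqb : ∀ x, |q x| ≤ Q)
    (hbp : ∀ x, |b x * p x| ≤ c)
    (hint : Integrable (fun x => Real.exp (-(b x / a x))) lam) :
    ∃ ε₀ > (0 : ℝ), ∃ C : ℝ, ∀ ε : ℝ, 0 < ε → ε < ε₀ →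
      Integrable (fun x => Real.exp (-((b x + ε * q x) / (a x + ε * p x)))) lam ∧
      (∫ x, Real.exp (-((b x + ε * q x) / (a x + ε * p x))) ∂lam) ≤ C := by

  have hcQ : (0:ℝ) ≤ c + c₂ * Q := by nlinarith
  obtain ⟨ε₀, hε₀def⟩ : ∃ e : ℝ, e = c₁ / (2 * (P + 1)) := ⟨_, rfl⟩
  have hε₀pos : 0 < ε₀ := by rw [hε₀def]; positivity
  obtain ⟨D, hDdef⟩ : ∃ d : ℝ, d = ε₀ * (2 * (c + c₂ * Q)) / c₁ ^ 2 := ⟨_, rfl⟩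
  have hDnn : 0 ≤ D := by
    rw [hDdef]
    exact div_nonneg (mul_nonneg hε₀pos.le (by linarith)) (by positivity)
  refine ⟨ε₀, hε₀pos, Real.exp D * ∫ x, Real.exp (-(b x / a x)) ∂lam, ?_⟩
  intro ε hε hεlt
  have hεε₀ : ε ≤ ε₀ := le_of_lt hεlt
  have hptbound : ∀ x, Real.exp (-((b x + ε * q x) / (a x + ε * p x)))
      ≤ Real.exp D * Real.exp (-(b x / a x)) := by
    intro x
    have hax : c₁ ≤ a x := (hab x).1
    have hax2 : a x ≤ c₂ := (hab x).2
    have hap : |p x| ≤ P := hpb x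
    have haq : |q x| ≤ Q := hqb x
    have habp : |b x * p x| ≤ c := hbp x
    have hp1 := abs_le.mp hap
    have hq1 := abs_le.mp haq
    have hbp1 := abs_le.mp habp
    have hapos : 0 < a x := lt_of_lt_of_le hc₁ hax
    have hε₀P : ε₀ * (P + 1) = c₁ / 2 := by
      rw [hε₀def, div_mul_eq_mul_div, div_eq_iff (by positivity)]; ring
    have hden : c₁ / 2 ≤ a x + ε * p x := by
      have h1 : ε * p x ≥ -(ε₀ * P) := by nlinarith [hp1.1, hεε₀, hε.le]
      nlinarith [hε₀pos]
    have hdenpos : 0 < a x + ε * p x := lt_of_lt_of_le (by linarith) hden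
    have key : b x / a x - (b x + ε * q x) / (a x + ε * p x) ≤ D := by
      rw [div_sub_div _ _ (ne_of_gt hapos) (ne_of_gt hdenpos),
        div_le_iff₀ (by positivity)]
      have hnum : b x * (a x + ε * p x) - a x * (b x + ε * q x)
          = ε * (b x * p x - a x * q x) := by ring
      rw [hnum]
      have h2 : ε * (b x * p x - a x * q x) ≤ ε₀ * (c + c₂ * Q) := by
        have h2a : b x * p x - a x * q x ≤ c + c₂ * Q := by nlinarith [hq1.1, hq1.2]
        have h2b := mul_le_mul_of_nonneg_left h2a hε.le
        have h2c := mul_le_mul_of_nonneg_right hεε₀ hcQ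
        nlinarith
      have h3 : ε₀ * (c + c₂ * Q) ≤ D * (a x * (a x + ε * p x)) := by
        have hD2 : D * c₁ ^ 2 = ε₀ * (2 * (c + c₂ * Q)) := by
          rw [hDdef, div_mul_cancel₀ _ (by positivity)]
        have hprod : c₁ * (c₁ / 2) ≤ a x * (a x + ε * p x) :=
          mul_le_mul hax hden (by positivity) hapos.le
        have h3a := mul_le_mul_of_nonneg_left hprod hDnn
        have h3b : ε₀ * (c + c₂ * Q) = D * (c₁ * (c₁ / 2)) := by
          linear_combination -hD2 / 2
        linarith
      linarith
    rw [← Real.exp_add]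
    exact Real.exp_le_exp.mpr (by linarith)
  have hmeas : AEStronglyMeasurable
      (fun x => Real.exp (-((b x + ε * q x) / (a x + ε * p x)))) lam :=
    (((hb.add (measurable_const.mul hq)).div
      (ha.add (measurable_const.mul hp))).neg.exp).aestronglyMeasurable
  have hintg : Integrable
      (fun x => Real.exp (-((b x + ε * q x) / (a x + ε * p x)))) lam := by
    apply Integrable.mono' ((hint.const_mul (Real.exp D)))
      hmeas
    filter_upwards with x
    rw [Real.norm_eq_abs, abs_of_nonneg (Real.exp_nonneg _)]
    exact hptbound x
  refine ⟨hintg, ?_⟩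
  calc (∫ x, Real.exp (-((b x + ε * q x) / (a x + ε * p x))) ∂lam)
      ≤ ∫ x, Real.exp D * Real.exp (-(b x / a x)) ∂lam := by
        exact integral_mono hintg (hint.const_mul _) hptbound
    _ = Real.exp D * ∫ x, Real.exp (-(b x / a x)) ∂lam := by
        rw [integral_const_mul]
end

section
/- Let (X, λ) be a finite measure space and let a, b, p, q : X → ℝ be measurable. Assume there are constants 0 < c₁ ≤ c₂ and P, Q, c ≥ 0 such that c₁ ≤ a(x) ≤ c₂, |p(x)| ≤ P, |q(x)| ≤ Q and |b(x) p(x)| ≤ c for all x ∈ X, and that x ↦ exp(−b(x)/a(x)) is integrable with respect to λ. Then the function x ↦ exp(−b(x)/a(x)) · (−q(x)/a(x) + b(x) p(x)/a(x)²) is integrable, and as ε → 0⁺, (1/ε)[ ∫_X exp(−(b + εq)/(a + εp)) dλ − ∫_X exp(−b/a) dλ ] → ∫_X exp(−b/a) · (−q/a + b p/a²) dλ. -/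
open MeasureTheory Filter Topology

/-- Gâteaux-derivative limit for the perturbed energy: under pointwise bounds
`c₁ ≤ a ≤ c₂`, `|p| ≤ P`, `|q| ≤ Q`, `|bp| ≤ c` and integrability of `exp(−b/a)`, the
function `exp(−b/a)(−q/a + bp/a²)` is integrable and
`(1/ε)[∫ exp(−(b+εq)/(a+εp)) dλ − ∫ exp(−b/a) dλ] → ∫ exp(−b/a)(−q/a + bp/a²) dλ`
as `ε → 0⁺`. -/
theorem stmt13 {X : Type*} [MeasurableSpace X] (lam : Measure X) [IsFiniteMeasure lam]
    (a b p q : X → ℝ) (ha : Measurable a) (hb : Measurable b) (hp : Measurable p)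
    (hq : Measurable q)
    (c₁ c₂ P Q c : ℝ) (hc₁ : 0 < c₁) (hc₁₂ : c₁ ≤ c₂)
    (hP : 0 ≤ P) (hQ : 0 ≤ Q) (hc : 0 ≤ c)
    (hab : ∀ x, c₁ ≤ a x ∧ a x ≤ c₂) (hpb : ∀ x, |p x| ≤ P) (hqb : ∀ x, |q x| ≤ Q)
    (hbp : ∀ x, |b x * p x| ≤ c)
    (hint : Integrable (fun x => Real.exp (-(b x / a x))) lam) :
    Integrable
      (fun x => Real.exp (-(b x / a x)) * (-(q x / a x) + b x * p x / (a x) ^ 2)) lam ∧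
    Tendsto
      (fun ε : ℝ => (1 / ε) *
        ((∫ x, Real.exp (-((b x + ε * q x) / (a x + ε * p x))) ∂lam) -
          ∫ x, Real.exp (-(b x / a x)) ∂lam))
      (𝓝[>] 0)
      (𝓝 (∫ x, Real.exp (-(b x / a x)) * (-(q x / a x) + b x * p x / (a x) ^ 2) ∂lam)) := by
  set δ : ℝ := c₁ / (2 * (P + 1)) with hδdef
  have hδpos : 0 < δ := by positivity
  have hc₂ : 0 < c₂ := lt_of_lt_of_le hc₁ hc₁₂
  have hδP : δ * P ≤ c₁ / 2 := by
    rw [hδdef, div_mul_eq_mul_div, div_le_div_iff₀ (by positivity) (by norm_num)]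
    nlinarith
  -- denominator lower bound
  have hden : ∀ x : X, ∀ ε : ℝ, |ε| < δ → c₁ / 2 ≤ a x + ε * p x := by
    intro x ε hε
    have h1 : |ε * p x| ≤ δ * P := by
      rw [abs_mul]
      exact mul_le_mul hε.le (hpb x) (abs_nonneg _) hδpos.le
    have := (hab x).1
    have h2 : -(c₁ / 2) ≤ ε * p x := by
      have := (abs_le.mp h1).1
      linarith
    linarith
  have hdenpos : ∀ x : X, ∀ ε : ℝ, |ε| < δ → 0 < a x + ε * p x := fun x ε hε =>
    lt_of_lt_of_le (by linarith) (hden x ε hε)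
  have hapos : ∀ x, 0 < a x := fun x => lt_of_lt_of_le hc₁ (hab x).1
  set M : ℝ := δ * (c + c₂ * Q) / (c₁ * (c₁ / 2)) with hMdef
  set K : ℝ := c + 2 * (δ * (Q * P)) + Q * c₂ with hKdef
  set C : ℝ := Real.exp M * (K / (c₁ / 2) ^ 2) with hCdef
  -- exponent comparison
  have hexp : ∀ x : X, ∀ ε : ℝ, |ε| < δ →
      Real.exp (-((b x + ε * q x) / (a x + ε * p x))) ≤ Real.exp M * Real.exp (-(b x / a x)) := by
    intro x ε hε
    rw [← Real.exp_add]
    apply Real.exp_le_exp.mpr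
    have hd := hdenpos x ε hε
    have ha0 := hapos x
    have key : -((b x + ε * q x) / (a x + ε * p x)) - (-(b x / a x)) =
        ε * (b x * p x - a x * q x) / (a x * (a x + ε * p x)) := by
      field_simp
      ring
    have hnum : |ε * (b x * p x - a x * q x)| ≤ δ * (c + c₂ * Q) := by
      rw [abs_mul]
      have h1 : |b x * p x - a x * q x| ≤ c + c₂ * Q := by
        have h2 : |a x * q x| ≤ c₂ * Q := by
          rw [abs_mul]
          exact mul_le_mul (abs_le.mpr ⟨by linarith [(hab x).1], (hab x).2⟩) (hqb x)
            (abs_nonneg _) hc₂.le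
        calc |b x * p x - a x * q x| ≤ |b x * p x| + |a x * q x| := abs_sub _ _
          _ ≤ c + c₂ * Q := add_le_add (hbp x) h2
      exact mul_le_mul hε.le h1 (abs_nonneg _) hδpos.le
    have hdlow : c₁ * (c₁ / 2) ≤ a x * (a x + ε * p x) :=
      mul_le_mul (hab x).1 (hden x ε hε) (by linarith) (le_of_lt ha0)
    have : ε * (b x * p x - a x * q x) / (a x * (a x + ε * p x)) ≤ M := by
      rw [hMdef]
      calc ε * (b x * p x - a x * q x) / (a x * (a x + ε * p x))
          ≤ |ε * (b x * p x - a x * q x)| / (a x * (a x + ε * p x)) := by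
            gcongr
            exact le_abs_self _
        _ ≤ δ * (c + c₂ * Q) / (c₁ * (c₁ / 2)) :=
            div_le_div₀ (by positivity) hnum (by positivity) hdlow
    linarith [key ▸ this]
  -- the perturbed integrand and its derivative in ε
  set F : ℝ → X → ℝ := fun ε x => Real.exp (-((b x + ε * q x) / (a x + ε * p x))) with hF
  set F' : ℝ → X → ℝ := fun ε x => Real.exp (-((b x + ε * q x) / (a x + ε * p x))) *
      (((b x + ε * q x) * p x - q x * (a x + ε * p x)) / (a x + ε * p x) ^ 2) with hF'
  have hFmeas : ∀ ε : ℝ, AEStronglyMeasurable (F ε) lam := by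
    intro ε
    exact (((hb.add (hq.const_mul ε)).div (ha.add (hp.const_mul ε))).neg.exp).aestronglyMeasurable
  have hF'meas : AEStronglyMeasurable (F' 0) lam := by
    apply Measurable.aestronglyMeasurable
    exact ((hb.add (hq.const_mul 0)).div (ha.add (hp.const_mul 0))).neg.exp.mul
      ((((hb.add (hq.const_mul 0)).mul hp).sub
        (hq.mul (ha.add (hp.const_mul 0)))).div ((ha.add (hp.const_mul 0)).pow_const 2))
  have hFint : Integrable (F 0) lam := by
    simpa [hF] using hint
  have h_bound : ∀ᵐ x ∂lam, ∀ ε ∈ Metric.ball (0:ℝ) δ, ‖F' ε x‖ ≤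
      C * Real.exp (-(b x / a x)) := by
    apply Filter.Eventually.of_forall
    intro x ε hε
    rw [Metric.mem_ball, Real.dist_eq, sub_zero] at hε
    have hd := hdenpos x ε hε
    have hnum : |(b x + ε * q x) * p x - q x * (a x + ε * p x)| ≤ K := by
      have h1 : |(b x + ε * q x) * p x| ≤ c + δ * (Q * P) := by
        calc |(b x + ε * q x) * p x| = |b x * p x + ε * q x * p x| := by ring_nf
          _ ≤ |b x * p x| + |ε * q x * p x| := abs_add_le _ _
          _ ≤ c + δ * (Q * P) := by
              refine add_le_add (hbp x) ?_
              rw [abs_mul, abs_mul]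
              calc |ε| * |q x| * |p x| ≤ δ * Q * P :=
                  mul_le_mul (mul_le_mul hε.le (hqb x) (abs_nonneg _) hδpos.le) (hpb x)
                    (abs_nonneg _) (by positivity)
                _ = δ * (Q * P) := by ring
      have h2 : |q x * (a x + ε * p x)| ≤ Q * c₂ + δ * (Q * P) := by
        calc |q x * (a x + ε * p x)| = |q x * a x + ε * (q x * p x)| := by ring_nf
          _ ≤ |q x * a x| + |ε * (q x * p x)| := abs_add_le _ _
          _ ≤ Q * c₂ + δ * (Q * P) := by
              refine add_le_add ?_ ?_
              · rw [abs_mul]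
                exact mul_le_mul (hqb x)
                  (abs_le.mpr ⟨by linarith [(hab x).1], (hab x).2⟩) (abs_nonneg _) hQ
              · rw [abs_mul, abs_mul]
                exact mul_le_mul hε.le
                  (mul_le_mul (hqb x) (hpb x) (abs_nonneg _) hQ) (by positivity) hδpos.le
      calc |(b x + ε * q x) * p x - q x * (a x + ε * p x)|
          ≤ |(b x + ε * q x) * p x| + |q x * (a x + ε * p x)| := abs_sub _ _
        _ ≤ K := by rw [hKdef]; linarith
    have hfrac : |((b x + ε * q x) * p x - q x * (a x + ε * p x)) / (a x + ε * p x) ^ 2|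
        ≤ K / (c₁ / 2) ^ 2 := by
      rw [abs_div, abs_of_pos (by positivity : (0:ℝ) < (a x + ε * p x) ^ 2)]
      exact div_le_div₀ (by positivity) hnum (by positivity)
        (pow_le_pow_left₀ (by linarith) (hden x ε hε) 2)
    have hKnn : 0 ≤ K := by positivity
    calc ‖F' ε x‖ = Real.exp (-((b x + ε * q x) / (a x + ε * p x))) *
          |((b x + ε * q x) * p x - q x * (a x + ε * p x)) / (a x + ε * p x) ^ 2| := by
          rw [hF']; simp [Real.norm_eq_abs, abs_mul, abs_div, abs_pow, abs_of_pos (Real.exp_pos _)]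
      _ ≤ (Real.exp M * Real.exp (-(b x / a x))) * (K / (c₁ / 2) ^ 2) :=
          mul_le_mul (hexp x ε hε) hfrac (abs_nonneg _) (by positivity)
      _ = C * Real.exp (-(b x / a x)) := by rw [hCdef]; ring
  have hbound_int : Integrable (fun x => C * Real.exp (-(b x / a x))) lam := hint.const_mul C
  have h_diff : ∀ᵐ x ∂lam, ∀ ε ∈ Metric.ball (0:ℝ) δ, HasDerivAt (F · x) (F' ε x) ε := by
    apply Filter.Eventually.of_forall
    intro x ε hε
    rw [Metric.mem_ball, Real.dist_eq, sub_zero] at hε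
    have hd := hdenpos x ε hε
    have hnum : HasDerivAt (fun ε : ℝ => b x + ε * q x) (q x) ε := by
      simpa using (hasDerivAt_mul_const (q x)).const_add (b x)
    have hdenom : HasDerivAt (fun ε : ℝ => a x + ε * p x) (p x) ε := by
      simpa using (hasDerivAt_mul_const (p x)).const_add (a x)
    have hdiv := (hnum.div hdenom (ne_of_gt hd)).neg
    have h := hdiv.exp
    have heq : Real.exp (-((b x + ε * q x) / (a x + ε * p x))) *
        (-((q x * (a x + ε * p x) - (b x + ε * q x) * p x) / (a x + ε * p x) ^ 2)) = F' ε x := by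
      rw [hF']; ring
    exact heq ▸ h
  obtain ⟨hint', hderiv⟩ := hasDerivAt_integral_of_dominated_loc_of_deriv_le (Metric.ball_mem_nhds 0 hδpos)
    (Filter.Eventually.of_forall hFmeas) hFint hF'meas h_bound hbound_int h_diff
  have heq0 : F' 0 = fun x => Real.exp (-(b x / a x)) * (-(q x / a x) + b x * p x / (a x) ^ 2) := by
    funext x
    have ha0 : a x ≠ 0 := ne_of_gt (hapos x)
    rw [hF']
    simp only [zero_mul, add_zero]
    field_simp
    ring
  refine ⟨heq0 ▸ hint', ?_⟩
  rw [← heq0]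
  have hF0 : (∫ x, F 0 x ∂lam) = ∫ x, Real.exp (-(b x / a x)) ∂lam := by
    simp [hF]
  have htend := hderiv.tendsto_slope_zero_right
  rw [hF0] at htend
  refine htend.congr fun ε => ?_
  simp [hF, div_eq_inv_mul, one_div]
end
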